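/- arXiv:2407.08927 — 5 statements merged into one kernel-verified Lean document; each statement's English description precedes it below -/
import Mathlib

section
/- Let n be a positive integer, let ε = 1/(4·17^6·48·192), and let G be a chordal graph on at least n − εn vertices with no clique of size εn. Then there exists Z ⊆ V(G) that is the union of at most 2 cliques, and pairwise disjoint, pairwise anticomplete sets X_1, X_2, X_3 ⊆ V(G) \ Z with |X_i| = ⌈n/17⌉ for each i. -/
open List
set_option linter.unusedSectionVars false
set_option linter.unusedVariables false
set_option maxHeartbeats 1000000

namespace St4
variable {V : Type*} [Fintype V] [DecidableEq V] {G : SimpleGraph V}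

section walks
variable (G)

/-- A walk from `u` to `v` with all vertices in `A`, given as a nonempty list of vertices. -/
def IsWalk (A : Finset V) (u v : V) (l : List V) : Prop :=
  l.IsChain G.Adj ∧ (∀ x ∈ l, x ∈ A) ∧ l.head? = some u ∧ l.getLast? = some v

/-- Connectivity within a vertex set `A`. -/
def Conn (A : Finset V) (u v : V) : Prop := ∃ l, IsWalk G A u v l

end walks

def Chordal (G : SimpleGraph V) : Prop :=
  ¬ ∃ (m : ℕ) (v : Fin (m + 4) → V), Function.Injective v ∧
      ∀ i j : Fin (m + 4), G.Adj (v i) (v j) ↔ (j = i + 1 ∨ i = j + 1)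

noncomputable def dvc (G : SimpleGraph V) (A : Finset V) (u v : V) : ℕ :=
  sInf {k | ∃ l, IsWalk G A u v l ∧ l.length = k}

noncomputable def comp (G : SimpleGraph V) (A : Finset V) (u : V) : Finset V :=
  @Finset.filter _ (fun v => Conn G A u v) (Classical.decPred _) A


lemma IsWalk.ne_nil {A : Finset V} {u v : V} {l : List V} (h : IsWalk G A u v l) : l ≠ [] := by
  rintro rfl; simp [IsWalk] at h

lemma IsWalk.length_pos {A : Finset V} {u v : V} {l : List V} (h : IsWalk G A u v l) :
    1 ≤ l.length := by
  have := h.ne_nil; cases l with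
  | nil => simp at this
  | cons a t => simp

lemma IsWalk.start_mem {A : Finset V} {u v : V} {l : List V} (h : IsWalk G A u v l) : u ∈ A := by
  obtain ⟨-, hmem, hh, -⟩ := h
  exact hmem _ (by cases l with
    | nil => simp at hh
    | cons a t => simp at hh; simp [hh])

lemma IsWalk.end_mem {A : Finset V} {u v : V} {l : List V} (h : IsWalk G A u v l) : v ∈ A := by
  obtain ⟨-, hmem, -, hl⟩ := h
  have := List.mem_of_mem_getLast? (by rw [hl]; rfl : v ∈ l.getLast?)
  · exact hmem _ this

lemma isWalk_singleton {A : Finset V} {u : V} (hu : u ∈ A) : IsWalk G A u u [u] := by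
  refine ⟨by simp, by simpa using hu, rfl, rfl⟩

lemma conn_refl {A : Finset V} {u : V} (hu : u ∈ A) : Conn G A u u :=
  ⟨[u], isWalk_singleton hu⟩

lemma IsWalk.reverse {A : Finset V} {u v : V} {l : List V} (h : IsWalk G A u v l) :
    IsWalk G A v u l.reverse := by
  obtain ⟨hc, hmem, hh, hl⟩ := h
  refine ⟨?_, by simpa using hmem, ?_, ?_⟩
  · rw [List.isChain_reverse]
    exact hc.imp (fun a b hab => hab.symm)
  · rw [List.head?_reverse]; exact hl
  · rw [List.getLast?_reverse]; exact hh

lemma Conn.symm {A : Finset V} {u v : V} (h : Conn G A u v) : Conn G A v u := by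
  obtain ⟨l, hl⟩ := h; exact ⟨l.reverse, hl.reverse⟩

lemma IsWalk.concat {A : Finset V} {u v w : V} {l₁ l₂ : List V}
    (h₁ : IsWalk G A u v l₁) (h₂ : IsWalk G A v w l₂) :
    IsWalk G A u w (l₁ ++ l₂.tail) ∧ (l₁ ++ l₂.tail).length + 1 = l₁.length + l₂.length := by
  obtain ⟨hc₁, hm₁, hh₁, hl₁⟩ := h₁
  obtain ⟨hc₂, hm₂, hh₂, hl₂⟩ := h₂
  cases l₂ with
  | nil => simp at hh₂
  | cons a t =>
    have ha : a = v := by simpa using hh₂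
    subst ha
    constructor
    · refine ⟨?_, ?_, ?_, ?_⟩
      · rw [List.isChain_append]
        refine ⟨hc₁, hc₂.tail, ?_⟩
        intro x hx y hy
        rw [hl₁] at hx; simp at hx; subst hx
        cases t with
        | nil => simp at hy
        | cons b t' =>
          simp at hy; subst hy
          exact (List.isChain_cons_cons.mp hc₂).1
      · intro x hx
        rcases List.mem_append.mp hx with h | h
        · exact hm₁ x h
        · exact hm₂ x (List.mem_of_mem_tail h)
      · obtain ⟨t₁, rfl⟩ : ∃ t₁, l₁ = u :: t₁ := by cases l₁ with
          | nil => simp at hh₁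
          | cons a t => simp at hh₁; exact ⟨t, by rw [hh₁]⟩
        simp
      · cases t with
        | nil =>
          have hvw : a = w := by simpa using hl₂
          simp only [List.tail_cons, List.append_nil]
          rw [hl₁, hvw]
        | cons b t' =>
          rw [List.getLast?_append]
          have : (b :: t').getLast? = some w := by
            have := hl₂
            rwa [List.getLast?_cons_cons] at this
          simp [List.tail_cons, this]
    · simp [List.length_append, List.length_tail]
      cases t <;> simp <;> omega

lemma Conn.trans {A : Finset V} {u v w : V} (h₁ : Conn G A u v) (h₂ : Conn G A v w) :
    Conn G A u w := by
  obtain ⟨l₁, h₁⟩ := h₁; obtain ⟨l₂, h₂⟩ := h₂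
  exact ⟨_, (h₁.concat h₂).1⟩

lemma IsWalk.mono {A B : Finset V} {u v : V} {l : List V} (h : IsWalk G A u v l)
    (hB : ∀ x ∈ l, x ∈ B) : IsWalk G B u v l :=
  ⟨h.1, hB, h.2.2.1, h.2.2.2⟩

lemma isWalk_pair {A : Finset V} {u v : V} (hu : u ∈ A) (hv : v ∈ A) (h : G.Adj u v) :
    IsWalk G A u v [u, v] := by
  refine ⟨by simp [h], by intro x hx; simp at hx; rcases hx with rfl | rfl <;> assumption, rfl, rfl⟩

lemma conn_of_adj {A : Finset V} {u v : V} (hu : u ∈ A) (hv : v ∈ A) (h : G.Adj u v) :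
    Conn G A u v := ⟨_, isWalk_pair hu hv h⟩

lemma head?_eq_some_iff {l : List V} {u : V} : l.head? = some u ↔ ∃ t, l = u :: t := by
  cases l <;> simp

lemma dvc_le {A : Finset V} {u v : V} {l : List V} (h : IsWalk G A u v l) :
    dvc G A u v ≤ l.length := Nat.sInf_le ⟨l, h, rfl⟩

lemma exists_walk_dvc {A : Finset V} {u v : V} (h : Conn G A u v) :
    ∃ l, IsWalk G A u v l ∧ l.length = dvc G A u v := by
  obtain ⟨l, hl⟩ := h
  have hne : {k | ∃ l, IsWalk G A u v l ∧ l.length = k}.Nonempty := ⟨l.length, l, hl, rfl⟩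
  exact Nat.sInf_mem hne

lemma one_le_dvc {A : Finset V} {u v : V} (h : Conn G A u v) : 1 ≤ dvc G A u v := by
  obtain ⟨l, hl, hlen⟩ := exists_walk_dvc h
  rw [← hlen]; exact hl.length_pos

lemma eq_of_dvc_eq_one {A : Finset V} {u v : V} (h : Conn G A u v) (h1 : dvc G A u v = 1) :
    u = v := by
  obtain ⟨l, hl, hlen⟩ := exists_walk_dvc h
  rw [h1] at hlen
  obtain ⟨x, rfl⟩ := List.length_eq_one_iff.mp hlen
  obtain ⟨-, -, hh, hla⟩ := hl
  simp at hh hla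
  rw [← hh, ← hla]

lemma dvc_self {A : Finset V} {u : V} (hu : u ∈ A) : dvc G A u u = 1 :=
  le_antisymm (by simpa using dvc_le (isWalk_singleton hu)) (one_le_dvc (conn_refl hu))

lemma IsWalk.take {A : Finset V} {u v : V} {l : List V} (h : IsWalk G A u v l)
    (i : ℕ) (hi : i < l.length) :
    IsWalk G A u (l.get ⟨i, hi⟩) (l.take (i+1)) ∧ (l.take (i+1)).length = i + 1 := by
  obtain ⟨hc, hm, hh, hla⟩ := h
  refine ⟨⟨hc.take _, fun x hx => hm x (List.take_subset _ _ hx), ?_, ?_⟩, by simp; omega⟩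
  · rw [List.head?_take]; simp [hh]
  · rw [List.getLast?_take]
    simp only [Nat.add_sub_cancel, if_neg (Nat.succ_ne_zero i)]
    rw [List.getElem?_eq_getElem hi]
    simp [List.get_eq_getElem]

lemma IsWalk.drop {A : Finset V} {u v : V} {l : List V} (h : IsWalk G A u v l)
    (i : ℕ) (hi : i < l.length) :
    IsWalk G A (l.get ⟨i, hi⟩) v (l.drop i) ∧ (l.drop i).length = l.length - i := by
  obtain ⟨hc, hm, hh, hla⟩ := h
  have hne : l.drop i ≠ [] := by
    intro hcon
    have := congrArg List.length hcon
    simp at this; omega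
  refine ⟨⟨hc.drop _, fun x hx => hm x (List.drop_subset _ _ hx), ?_, ?_⟩, by simp⟩
  · rw [List.head?_drop, List.getElem?_eq_getElem hi]
    simp [List.get_eq_getElem]
  · have key : l.getLast? = ((l.drop i).getLast?).or ((l.take i).getLast?) := by
      conv_lhs => rw [← List.take_append_drop i l]
      rw [List.getLast?_append]
    obtain ⟨x, hx⟩ : ∃ x, (l.drop i).getLast? = some x :=
      ⟨(l.drop i).getLast hne, List.getLast?_eq_getLast hne⟩
    rw [hx] at key
    simp at key
    rw [hx, ← key, hla]

lemma IsWalk.glue {A : Finset V} {u x y v : V} {l₁ l₂ : List V}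
    (h₁ : IsWalk G A u x l₁) (h₂ : IsWalk G A y v l₂) (hxy : G.Adj x y) :
    IsWalk G A u v (l₁ ++ l₂) := by
  obtain ⟨hc₁, hm₁, hh₁, hl₁⟩ := h₁
  obtain ⟨hc₂, hm₂, hh₂, hl₂⟩ := h₂
  refine ⟨?_, ?_, ?_, ?_⟩
  · rw [List.isChain_append]
    refine ⟨hc₁, hc₂, fun a ha b hb => ?_⟩
    rw [hl₁] at ha; rw [hh₂] at hb; simp at ha hb; rw [← ha, ← hb]; exact hxy
  · intro z hz; rcases List.mem_append.mp hz with h | h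
    · exact hm₁ z h
    · exact hm₂ z h
  · obtain ⟨t₁, rfl⟩ : ∃ t₁, l₁ = u :: t₁ := by
      cases l₁ with
      | nil => simp at hh₁
      | cons a t => simp at hh₁; exact ⟨t, by rw [hh₁]⟩
    simp
  · rw [List.getLast?_append, hl₂]; rfl

/-- A geodesic between two connected vertices: minimal length, no repeats, no chords,
and the distance to the `i`-th vertex is exactly `i+1` (counting vertices). -/
lemma exists_good_walk {A : Finset V} {u v : V} (h : Conn G A u v) :
    ∃ l, IsWalk G A u v l ∧ l.length = dvc G A u v ∧
      (∀ i j (hi : i < l.length) (hj : j < l.length), i < j →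
        l.get ⟨i, hi⟩ = l.get ⟨j, hj⟩ → False) ∧
      (∀ i j (hi : i < l.length) (hj : j < l.length), i + 1 < j →
        ¬ G.Adj (l.get ⟨i, hi⟩) (l.get ⟨j, hj⟩)) ∧
      (∀ i (hi : i < l.length), dvc G A u (l.get ⟨i, hi⟩) = i + 1) := by
  obtain ⟨l, hl, hlen⟩ := exists_walk_dvc h
  have hn : l.length = dvc G A u v := hlen
  refine ⟨l, hl, hn, ?_, ?_, ?_⟩
  · intro i j hi hj hij heq
    obtain ⟨ht, htlen⟩ := hl.take i hi
    obtain ⟨hd, hdlen⟩ := hl.drop j hj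
    rw [heq] at ht
    obtain ⟨hcat, hcatlen⟩ := ht.concat hd
    have := dvc_le hcat
    rw [htlen, hdlen] at hcatlen
    omega
  · intro i j hi hj hij hadj
    obtain ⟨ht, htlen⟩ := hl.take i hi
    obtain ⟨hd, hdlen⟩ := hl.drop j hj
    have hcat := ht.glue hd hadj
    have := dvc_le hcat
    rw [List.length_append, htlen, hdlen] at this
    omega
  · intro i hi
    obtain ⟨ht, htlen⟩ := hl.take i hi
    have hle : dvc G A u (l.get ⟨i, hi⟩) ≤ i + 1 := htlen ▸ dvc_le ht
    obtain ⟨l', hl', hlen'⟩ := exists_walk_dvc ⟨_, ht⟩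
    obtain ⟨hd, hdlen⟩ := hl.drop i hi
    obtain ⟨hcat, hcatlen⟩ := hl'.concat hd
    have := dvc_le hcat
    rw [hlen', hdlen] at hcatlen
    omega

lemma getLast_get {l : List V} {v : V} (hla : l.getLast? = some v) (h : 1 ≤ l.length) :
    l.get ⟨l.length - 1, by omega⟩ = v := by
  have := List.getLast?_eq_getElem? (l := l)
  rw [hla, List.getElem?_eq_getElem (by omega)] at this
  exact (Option.some_injective _ this).symm

/-- A connected set with at least two elements has a non-cut vertex distinct from
any prescribed vertex. -/
lemma exists_noncut {A : Finset V} (hconn : ∀ u ∈ A, ∀ v ∈ A, Conn G A u v)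
    {u₀ : V} (hu₀ : u₀ ∈ A) (h2 : 2 ≤ A.card) :
    ∃ d ∈ A, d ≠ u₀ ∧ ∀ u ∈ A.erase d, ∀ v ∈ A.erase d, Conn G (A.erase d) u v := by
  obtain ⟨d, hd, hmax⟩ := Finset.exists_max_image A (dvc G A u₀) ⟨u₀, hu₀⟩
  obtain ⟨w, hw, hwne⟩ := Finset.exists_mem_ne (s := A) (by omega) u₀
  have hconnw : Conn G A u₀ w := hconn _ hu₀ _ hw
  have hw2 : 2 ≤ dvc G A u₀ w := by
    have h1 := one_le_dvc hconnw
    rcases Nat.lt_or_ge (dvc G A u₀ w) 2 with h | h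
    · exact absurd (eq_of_dvc_eq_one hconnw (by omega)) (fun he => hwne he.symm)
    · exact h
  have hd2 : 2 ≤ dvc G A u₀ d := le_trans hw2 (hmax _ hw)
  have hdne : d ≠ u₀ := by
    intro rfl'
    rw [rfl', dvc_self hu₀] at hd2; omega
  have key : ∀ w' ∈ A.erase d, Conn G (A.erase d) u₀ w' := by
    intro w' hw'
    have hw'A : w' ∈ A := Finset.mem_of_mem_erase hw'
    have hw'd : w' ≠ d := Finset.ne_of_mem_erase hw'
    obtain ⟨l, hl, hlen, hnd, hch, hdist⟩ := exists_good_walk (hconn _ hu₀ _ hw'A)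
    refine ⟨l, hl.mono ?_⟩
    intro x hx
    obtain ⟨⟨i, hi⟩, rfl⟩ := List.mem_iff_get.mp hx
    refine Finset.mem_erase.mpr ⟨?_, hl.2.1 _ hx⟩
    intro hxd
    have hdi : dvc G A u₀ d = i + 1 := by rw [← hxd]; exact hdist i hi
    have hle : dvc G A u₀ w' ≤ dvc G A u₀ d := hmax _ hw'A
    have hi1 : i = l.length - 1 := by omega
    subst hi1
    have : l.get ⟨l.length - 1, hi⟩ = w' := getLast_get hl.2.2.2 hl.length_pos
    exact hw'd (by rw [← this, hxd])
  exact ⟨d, hd, hdne, fun u hu v hv => (key u hu).symm.trans (key v hv)⟩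

lemma fin_succ_iff {k : ℕ} (i j : Fin (k+1)) :
    j = i + 1 ↔ ((j : ℕ) = (i : ℕ) + 1 ∨ ((i : ℕ) = k ∧ (j : ℕ) = 0)) := by
  rw [Fin.ext_iff, Fin.val_add_one]
  have hik := i.isLt
  have hjk := j.isLt
  split_ifs with h
  · have hk : (i : ℕ) = k := by simp [Fin.ext_iff] at h; omega
    omega
  · have hk : (i : ℕ) ≠ k := by
      intro hc
      exact h (Fin.ext (by simp [hc]))
    omega

/-- From a cyclically-arranged family of `M+4` vertices whose adjacencies are exactly the
consecutive ones, derive a contradiction with chordality. -/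
lemma no_cycle (hch : Chordal G) (M : ℕ) (f : ℕ → V)
    (hinj : ∀ i ≤ M+3, ∀ j ≤ M+3, f i = f j → i = j)
    (hadj : ∀ i ≤ M+3, ∀ j ≤ M+3, (G.Adj (f i) (f j) ↔
      (j = i+1 ∨ i = j+1 ∨ (i = 0 ∧ j = M+3) ∨ (j = 0 ∧ i = M+3)))) : False := by
  apply hch
  refine ⟨M, fun i => f i.val, ?_, ?_⟩
  · intro i j h
    exact Fin.ext (hinj i.val (by have := i.isLt; omega) j.val (by have := j.isLt; omega) h)
  · intro i j
    have hik := i.isLt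
    have hjk := j.isLt
    rw [hadj i.val (by omega) j.val (by omega)]
    rw [fin_succ_iff (k := M+3) i j, fin_succ_iff (k := M+3) j i]
    omega

lemma head_get {l : List V} {u : V} (h : l.head? = some u) (hp : 0 < l.length) :
    l.get ⟨0, hp⟩ = u := by
  cases l with
  | nil => simp at h
  | cons a t => simp_all

/-- Key chordal lemma: a connected set dominating all vertices of a clique contains a
vertex adjacent to the whole clique. -/
lemma clique_absorb (hch : Chordal G) (S : Finset V) (hS : G.IsClique ↑S) :
    ∀ N (D : Finset V), D.card ≤ N →
      (∀ x ∈ S, x ∉ D) → (∀ u ∈ D, ∀ v ∈ D, Conn G D u v) →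
      (∀ s ∈ S, ∃ d ∈ D, G.Adj s d) → D.Nonempty →
      ∃ d ∈ D, ∀ s ∈ S, G.Adj s d := by
  intro N
  induction N with
  | zero =>
    intro D hcard hdisj hconn hdom hne
    exact absurd (Finset.card_pos.mpr hne) (by omega)
  | succ N IH =>
    intro D hcard hdisj hconn hdom hne
    by_cases hD1 : D.card = 1
    · obtain ⟨d, rfl⟩ := Finset.card_eq_one.mp hD1
      refine ⟨d, by simp, fun s hs => ?_⟩
      obtain ⟨d', hd', hadj⟩ := hdom s hs
      simp at hd'
      rwa [hd'] at hadj
    · have h2 : 2 ≤ D.card := by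
        have := Finset.card_pos.mpr hne; omega
      by_cases hrem : ∃ d ∈ D, (∀ u ∈ D.erase d, ∀ v ∈ D.erase d, Conn G (D.erase d) u v) ∧
          ∀ s ∈ S, ∃ d' ∈ D.erase d, G.Adj s d'
      · obtain ⟨d, hd, hc, hdm⟩ := hrem
        have hce := Finset.card_erase_of_mem hd
        obtain ⟨d', hd', ha⟩ := IH (D.erase d) (by omega)
          (fun x hx hc' => hdisj x hx (Finset.mem_of_mem_erase hc')) hc hdm
          (Finset.card_pos.mp (by omega))
        exact ⟨d', Finset.mem_of_mem_erase hd', ha⟩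
      · push_neg at hrem
        obtain ⟨u₀, hu₀⟩ := hne
        obtain ⟨d₁, hd₁, -, hc₁⟩ := exists_noncut hconn hu₀ h2
        obtain ⟨s₁, hs₁S, hs₁p⟩ := hrem d₁ hd₁ hc₁
        have hs₁d₁ : G.Adj s₁ d₁ := by
          obtain ⟨d, hd, hadj⟩ := hdom s₁ hs₁S
          rcases eq_or_ne d d₁ with rfl | hne'
          · exact hadj
          · exact absurd hadj (hs₁p d (Finset.mem_erase.mpr ⟨hne', hd⟩))
        obtain ⟨d₂, hd₂, hd₂₁, hc₂⟩ := exists_noncut hconn hd₁ h2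
        obtain ⟨s₂, hs₂S, hs₂p⟩ := hrem d₂ hd₂ hc₂
        have hs₂d₂ : G.Adj s₂ d₂ := by
          obtain ⟨d, hd, hadj⟩ := hdom s₂ hs₂S
          rcases eq_or_ne d d₂ with rfl | hne'
          · exact hadj
          · exact absurd hadj (hs₂p d (Finset.mem_erase.mpr ⟨hne', hd⟩))
        have hs₂d₁ : ¬ G.Adj s₂ d₁ := hs₂p d₁ (Finset.mem_erase.mpr ⟨fun h => hd₂₁ h.symm, hd₁⟩)
        have hs12 : s₁ ≠ s₂ := fun h => hs₂d₁ (h ▸ hs₁d₁)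
        have hadj12 : G.Adj s₁ s₂ :=
          hS (Finset.mem_coe.mpr hs₁S) (Finset.mem_coe.mpr hs₂S) hs12
        obtain ⟨l, hl, hlen, hnd, hchord, hdist⟩ := exists_good_walk (hconn d₁ hd₁ d₂ hd₂)
        have hn1 : 1 ≤ l.length := hl.length_pos
        have hn2 : 2 ≤ l.length := by
          rcases Nat.lt_or_ge l.length 2 with h | h
          · have : l.length = 1 := by omega
            exact absurd (eq_of_dvc_eq_one (hconn d₁ hd₁ d₂ hd₂) (by omega)).symm hd₂₁
          · exact h
        set n := l.length with hn
        have hd₁0 : ∀ (h : 0 < n), l.get ⟨0, h⟩ = d₁ := fun h => head_get hl.2.2.1 h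
        have hd₂n : ∀ (h : n - 1 < n), l.get ⟨n-1, h⟩ = d₂ := fun h => getLast_get hl.2.2.2 hn1
        have hmemD : ∀ (i) (h : i < n), l.get ⟨i, h⟩ ∈ D := fun i h => hl.2.1 _ (l.get_mem ⟨i, h⟩)
        have hs₁D : s₁ ∉ D := hdisj s₁ hs₁S
        have hs₂D : s₂ ∉ D := hdisj s₂ hs₂S
        have H1 : ∀ (i) (h : i < n), (G.Adj s₁ (l.get ⟨i, h⟩) ↔ i = 0) := by
          intro i h
          constructor
          · intro hadj
            by_contra hi0
            refine hs₁p (l.get ⟨i, h⟩) (Finset.mem_erase.mpr ⟨?_, hmemD i h⟩) hadj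
            intro heq
            exact hnd 0 i (by omega) h (by omega) (by rw [hd₁0 (by omega), ← heq])
          · rintro rfl
            rw [hd₁0 h]
            exact hs₁d₁
        have H2 : ∀ (i) (h : i < n), (G.Adj s₂ (l.get ⟨i, h⟩) ↔ i = n - 1) := by
          intro i h
          constructor
          · intro hadj
            by_contra hi0
            refine hs₂p (l.get ⟨i, h⟩) (Finset.mem_erase.mpr ⟨?_, hmemD i h⟩) hadj
            intro heq
            exact hnd i (n-1) h (by omega) (by omega) (by rw [hd₂n (by omega), ← heq])
          · rintro rfl
            rw [hd₂n h]
            exact hs₂d₂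
        have Hmid : ∀ i j (hi : i < n) (hj : j < n),
            (G.Adj (l.get ⟨i, hi⟩) (l.get ⟨j, hj⟩) ↔ (j = i + 1 ∨ i = j + 1)) := by
          intro i j hi hj
          constructor
          · intro hadj
            rcases lt_trichotomy i j with h | h | h
            · left
              by_contra hc
              exact hchord i j hi hj (by omega) hadj
            · subst h
              exact absurd hadj G.irrefl
            · right
              by_contra hc
              exact hchord j i hj hi (by omega) hadj.symm
          · have hcg := List.isChain_iff_getElem.mp hl.1
            rintro (rfl | rfl)
            · exact hcg i (by omega)
            · exact (hcg j (by omega)).symm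
        -- build the forbidden cycle  s₁, l₀, …, l_{n-1}, s₂
        set f : ℕ → V := fun i =>
          if h : 1 ≤ i ∧ i - 1 < n then l.get ⟨i-1, h.2⟩ else if i = 0 then s₁ else s₂
          with hf
        have hf0 : f 0 = s₁ := by simp [hf]
        have hfn1 : f (n+1) = s₂ := by
          rw [hf]; dsimp only
          rw [dif_neg (by omega), if_neg (by omega)]
        have hfmid : ∀ i, 1 ≤ i → i ≤ n → ∀ (h : i - 1 < n), f i = l.get ⟨i-1, h⟩ := by
          intro i h1 h2 h
          rw [hf]; dsimp only
          rw [dif_pos ⟨h1, h⟩]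
        exfalso
        apply no_cycle hch (n - 2) f
        · intro i hi j hj heq
          rcases (by omega : i = 0 ∨ (1 ≤ i ∧ i ≤ n) ∨ i = n + 1) with rfl | ⟨hi1, hi2⟩ | rfl <;>
            rcases (by omega : j = 0 ∨ (1 ≤ j ∧ j ≤ n) ∨ j = n + 1) with rfl | ⟨hj1, hj2⟩ | rfl
          · rfl
          · rw [hf0, hfmid j hj1 hj2 (by omega)] at heq
            exact absurd (heq ▸ hmemD (j-1) (by omega)) hs₁D
          · rw [hf0, hfn1] at heq
            exact absurd heq hs12
          · rw [hf0, hfmid i hi1 hi2 (by omega)] at heq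
            exact absurd (heq.symm ▸ hmemD (i-1) (by omega)) hs₁D
          · rw [hfmid i hi1 hi2 (by omega), hfmid j hj1 hj2 (by omega)] at heq
            rcases lt_trichotomy (i-1) (j-1) with h | h | h
            · exact absurd heq (fun hc => hnd (i-1) (j-1) (by omega) (by omega) h hc)
            · omega
            · exact absurd heq.symm (fun hc => hnd (j-1) (i-1) (by omega) (by omega) h hc)
          · rw [hfmid i hi1 hi2 (by omega), hfn1] at heq
            exact absurd (heq.symm ▸ hmemD (i-1) (by omega)) hs₂D
          · rw [hfn1, hf0] at heq
            exact absurd heq.symm hs12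
          · rw [hfn1, hfmid j hj1 hj2 (by omega)] at heq
            exact absurd (heq ▸ hmemD (j-1) (by omega)) hs₂D
          · rfl
        · intro i hi j hj
          have hM3 : n - 2 + 3 = n + 1 := by omega
          rw [hM3] at hi hj ⊢
          rcases (by omega : i = 0 ∨ (1 ≤ i ∧ i ≤ n) ∨ i = n + 1) with rfl | ⟨hi1, hi2⟩ | rfl <;>
            rcases (by omega : j = 0 ∨ (1 ≤ j ∧ j ≤ n) ∨ j = n + 1) with rfl | ⟨hj1, hj2⟩ | rfl
          · rw [hf0]
            exact iff_of_false G.irrefl (by omega)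
          · rw [hf0, hfmid j hj1 hj2 (by omega), H1 (j-1) (by omega)]
            omega
          · rw [hf0, hfn1]
            exact iff_of_true hadj12 (by omega)
          · rw [hfmid i hi1 hi2 (by omega), hf0, G.adj_comm, H1 (i-1) (by omega)]
            omega
          · rw [hfmid i hi1 hi2 (by omega), hfmid j hj1 hj2 (by omega),
              Hmid (i-1) (j-1) (by omega) (by omega)]
            omega
          · rw [hfmid i hi1 hi2 (by omega), hfn1, G.adj_comm, H2 (i-1) (by omega)]
            omega
          · rw [hfn1, hf0]
            exact iff_of_true hadj12.symm (by omega)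
          · rw [hfn1, hfmid j hj1 hj2 (by omega), H2 (j-1) (by omega)]
            omega
          · rw [hfn1]
            exact iff_of_false G.irrefl (by omega)

lemma mem_comp {A : Finset V} {u v : V} : v ∈ comp G A u ↔ v ∈ A ∧ Conn G A u v := by
  simp [comp, Finset.mem_filter]

lemma comp_subset {A : Finset V} {u : V} : comp G A u ⊆ A := fun x hx => (mem_comp.mp hx).1

lemma self_mem_comp {A : Finset V} {u : V} (hu : u ∈ A) : u ∈ comp G A u :=
  mem_comp.mpr ⟨hu, conn_refl hu⟩

lemma comp_eq_of_mem {A : Finset V} {u v : V} (hv : v ∈ comp G A u) :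
    comp G A u = comp G A v := by
  obtain ⟨hvA, hconn⟩ := mem_comp.mp hv
  ext x
  simp only [mem_comp]
  exact ⟨fun ⟨hx, h⟩ => ⟨hx, hconn.symm.trans h⟩, fun ⟨hx, h⟩ => ⟨hx, hconn.trans h⟩⟩

lemma adj_mem_comp {A : Finset V} {u x y : V} (hx : x ∈ comp G A u) (hy : y ∈ A)
    (hadj : G.Adj x y) : y ∈ comp G A u := by
  obtain ⟨hxA, hconn⟩ := mem_comp.mp hx
  exact mem_comp.mpr ⟨hy, hconn.trans (conn_of_adj hxA hy hadj)⟩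

lemma IsWalk.last_mem {A : Finset V} {u v : V} {l : List V} (h : IsWalk G A u v l) : v ∈ l :=
  List.mem_of_mem_getLast? (by rw [h.2.2.2]; rfl)

lemma walk_closed {A : Finset V} {P : V → Prop} {u v : V} {l : List V}
    (hl : IsWalk G A u v l) (hP : P u)
    (hstep : ∀ x y, P x → x ∈ A → y ∈ A → G.Adj x y → P y) : ∀ z ∈ l, P z := by
  induction l generalizing u with
  | nil => simp
  | cons a t IH =>
    have ha : a = u := by
      have := hl.2.2.1; simp at this; exact this
    subst ha
    intro z hz
    rcases List.mem_cons.mp hz with rfl | hz'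
    · exact hP
    · cases t with
      | nil => simp at hz'
      | cons b t' =>
        have hadj : G.Adj a b := (List.isChain_cons_cons.mp hl.1).1
        have hwalk' : IsWalk G A b v (b :: t') := by
          refine ⟨(List.isChain_cons_cons.mp hl.1).2, fun x hx => hl.2.1 x (List.mem_cons_of_mem _ hx),
            rfl, ?_⟩
          have := hl.2.2.2
          rwa [List.getLast?_cons_cons] at this
        have hPb : P b := hstep a b hP (hl.2.1 a (by simp)) (hl.2.1 b (by simp)) hadj
        exact IH hwalk' hPb z hz'

lemma comp_closed {A : Finset V} {P : V → Prop} {w : V} (hw : w ∈ A) (hP : P w)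
    (hstep : ∀ x y, P x → x ∈ A → y ∈ A → G.Adj x y → P y) :
    ∀ x ∈ comp G A w, P x := by
  intro x hx
  obtain ⟨hxA, l, hl⟩ := mem_comp.mp hx
  exact walk_closed hl hP hstep x hl.last_mem

lemma comp_conn {A : Finset V} {u : V} (hu : u ∈ A) :
    ∀ x ∈ comp G A u, ∀ y ∈ comp G A u, Conn G (comp G A u) x y := by
  intro x hx y hy
  obtain ⟨hxA, hcx⟩ := mem_comp.mp hx
  obtain ⟨hyA, hcy⟩ := mem_comp.mp hy
  obtain ⟨l, hl⟩ := hcx.symm.trans hcy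
  refine ⟨l, hl.mono ?_⟩
  intro z hz
  exact walk_closed hl hx (fun a b hPa haA hbA hadj => adj_mem_comp hPa hbA hadj) z hz

/-- Balanced clique separator for chordal graphs (relative version). -/
theorem balanced_sep (hch : Chordal G) (A : Finset V) :
    ∃ K : Finset V, K ⊆ A ∧ G.IsClique ↑K ∧
      ∀ u ∈ A \ K, 2 * (comp G (A \ K) u).card ≤ A.card := by
  classical
  set CL : Finset (Finset V) := A.powerset.filter (fun K => G.IsClique ↑K) with hCL
  set μ : Finset V → ℕ := fun K => ((A \ K).sup fun u => (comp G (A \ K) u).card) with hμ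
  have hCLne : CL.Nonempty := ⟨∅, by simp [hCL]⟩
  obtain ⟨K, hKCL, hKmin⟩ := Finset.exists_min_image CL μ hCLne
  have hKA : K ⊆ A := Finset.mem_powerset.mp (Finset.mem_filter.mp hKCL).1
  have hKcl : G.IsClique ↑K := (Finset.mem_filter.mp hKCL).2
  refine ⟨K, hKA, hKcl, ?_⟩
  by_contra hbad
  push_neg at hbad
  obtain ⟨u, huR, hDbig⟩ := hbad
  set R := A \ K with hR
  set D := comp G R u with hD
  have hDR : D ⊆ R := comp_subset
  have hDA : D ⊆ A := hDR.trans (Finset.sdiff_subset)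
  have huD : u ∈ D := self_mem_comp huR
  have hD1 : 1 ≤ D.card := Finset.card_pos.mpr ⟨u, huD⟩
  set S : Finset V := K.filter (fun s => ∃ d ∈ D, G.Adj s d) with hS
  have hSK : S ⊆ K := Finset.filter_subset _ _
  have hScl : G.IsClique ↑S := hKcl.subset (by exact_mod_cast hSK)
  obtain ⟨d, hdD, hdadj⟩ := clique_absorb hch S hScl D.card D le_rfl
    (fun x hx hxD => (Finset.mem_sdiff.mp (hDR hxD)).2 (hSK hx))
    (comp_conn huR) (fun s hs => (Finset.mem_filter.mp hs).2) ⟨u, huD⟩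
  set K' : Finset V := insert d S with hK'
  have hK'cl : G.IsClique ↑K' := by
    rw [hK', Finset.coe_insert]
    exact hScl.insert (fun b hb hne => (hdadj b hb).symm)
  have hK'A : K' ⊆ A := by
    rw [hK']
    intro x hx
    rcases Finset.mem_insert.mp hx with rfl | hx'
    · exact hDA hdD
    · exact hKA (hSK hx')
  have hK'CL : K' ∈ CL := Finset.mem_filter.mpr ⟨Finset.mem_powerset.mpr hK'A, hK'cl⟩
  set R' := A \ K' with hR'
  -- every component of `R'` is small
  have hsmall : ∀ w ∈ R', (comp G R' w).card ≤ D.card - 1 := by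
    intro w hwR'
    have hwA : w ∈ A := (Finset.mem_sdiff.mp hwR').1
    have hwK' : w ∉ K' := (Finset.mem_sdiff.mp hwR').2
    by_cases hwD : w ∈ D
    · -- the component stays inside `D.erase d`
      have hsub : comp G R' w ⊆ D.erase d := by
        intro x hx
        refine comp_closed hwR' (Finset.mem_erase.mpr ⟨?_, hwD⟩) ?_ x hx
        · intro heq; exact hwK' (heq ▸ Finset.mem_insert_self d S)
        · intro x y hPx hxR' hyR' hadj
          obtain ⟨hxd, hxD⟩ := Finset.mem_erase.mp hPx
          have hyA : y ∈ A := (Finset.mem_sdiff.mp hyR').1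
          have hyK' : y ∉ K' := (Finset.mem_sdiff.mp hyR').2
          have hyd : y ≠ d := fun heq => hyK' (heq ▸ Finset.mem_insert_self d S)
          have hyS : y ∉ S := fun hyS' => hyK' (Finset.mem_insert_of_mem hyS')
          have hyK : y ∉ K := by
            intro hyK
            exact hyS (Finset.mem_filter.mpr ⟨hyK, x, hxD, hadj.symm⟩)
          have hyR : y ∈ R := Finset.mem_sdiff.mpr ⟨hyA, hyK⟩
          have hxcomp : x ∈ comp G R x := self_mem_comp (hDR hxD)
          have : y ∈ comp G R x := adj_mem_comp hxcomp hyR hadj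
          rw [← comp_eq_of_mem hxD] at this
          exact Finset.mem_erase.mpr ⟨hyd, this⟩
      calc (comp G R' w).card ≤ (D.erase d).card := Finset.card_le_card hsub
        _ = D.card - 1 := Finset.card_erase_of_mem hdD
    · -- the component avoids `D` entirely
      have hsub : comp G R' w ⊆ A \ D := by
        intro x hx
        have hxP : x ∈ A ∧ x ∉ D := by
          refine comp_closed (P := fun z => z ∈ A ∧ z ∉ D) hwR' ⟨hwA, hwD⟩ ?_ x hx
          intro x y hPx hxR' hyR' hadj
          have hyA : y ∈ A := (Finset.mem_sdiff.mp hyR').1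
          refine ⟨hyA, fun hyD => ?_⟩
          have hxK' : x ∉ K' := (Finset.mem_sdiff.mp hxR').2
          have hxS : x ∉ S := fun h => hxK' (Finset.mem_insert_of_mem h)
          have hxK : x ∉ K := by
            intro hxK
            exact hxS (Finset.mem_filter.mpr ⟨hxK, y, hyD, hadj⟩)
          have hxR : x ∈ R := Finset.mem_sdiff.mpr ⟨(Finset.mem_sdiff.mp hxR').1, hxK⟩
          have hycomp : y ∈ comp G R y := self_mem_comp (hDR hyD)
          have : x ∈ comp G R y := adj_mem_comp hycomp hxR hadj.symm
          rw [← comp_eq_of_mem hyD] at this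
          exact hPx.2 this
        exact Finset.mem_sdiff.mpr hxP
      have hcard : (A \ D).card = A.card - D.card := Finset.card_sdiff_of_subset hDA
      calc (comp G R' w).card ≤ (A \ D).card := Finset.card_le_card hsub
        _ ≤ D.card - 1 := by omega
  have hμK' : μ K' ≤ D.card - 1 := by
    rw [hμ]
    refine Finset.sup_le ?_
    intro w hw
    rw [← hR'] at hw ⊢
    exact hsmall w hw
  have hμK : D.card ≤ μ K := by
    rw [hμ, hD, hR]
    exact Finset.le_sup (f := fun u => (comp G (A \ K) u).card) (by rw [← hR]; exact huR)
  have := hKmin K' hK'CL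
  omega

/-- Greedy balancing of a family of small sets. -/
lemma greedy (𝒞 : Finset (Finset V)) (N₀ : ℕ) (hM : ∀ C ∈ 𝒞, 2 * C.card ≤ N₀) :
    ∃ 𝒮 ⊆ 𝒞, 2 * (∑ C ∈ 𝒞, C.card) ≤ 4 * (∑ C ∈ 𝒮, C.card) + N₀ ∧
      4 * (∑ C ∈ 𝒮, C.card) ≤ 2 * (∑ C ∈ 𝒞, C.card) + N₀ := by
  classical
  set T := ∑ C ∈ 𝒞, C.card with hT
  set cand : Finset (Finset (Finset V)) :=
    𝒞.powerset.filter (fun 𝒮 => 4 * (∑ C ∈ 𝒮, C.card) ≤ 2 * T + N₀) with hcand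
  have hne : cand.Nonempty := ⟨∅, by simp [hcand]⟩
  obtain ⟨𝒮, h𝒮, hmax⟩ : ∃ 𝒮 ∈ cand, ∀ x ∈ cand, ¬ 𝒮 < x := by
    obtain ⟨𝒮, h⟩ := Finset.exists_maximal hne
    exact ⟨𝒮, h.1, fun x hx hlt => lt_irrefl _ (lt_of_lt_of_le hlt (h.2 hx hlt.le))⟩
  obtain ⟨h𝒮sub, h𝒮le⟩ := Finset.mem_filter.mp h𝒮
  have h𝒮𝒞 : 𝒮 ⊆ 𝒞 := Finset.mem_powerset.mp h𝒮sub
  refine ⟨𝒮, h𝒮𝒞, ?_, h𝒮le⟩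
  by_contra hlt
  push_neg at hlt
  have hne𝒞 : 𝒮 ≠ 𝒞 := by
    intro rfl'
    rw [rfl'] at hlt
    omega
  obtain ⟨C, hC𝒞, hC𝒮⟩ := Finset.exists_of_ssubset (h𝒮𝒞.ssubset_of_ne hne𝒞)
  have hCcard := hM C hC𝒞
  have hsum : ∑ D ∈ insert C 𝒮, D.card = C.card + ∑ D ∈ 𝒮, D.card :=
    Finset.sum_insert hC𝒮
  have hmem : insert C 𝒮 ∈ cand := by
    refine Finset.mem_filter.mpr ⟨Finset.mem_powerset.mpr (Finset.insert_subset hC𝒞 h𝒮𝒞), ?_⟩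
    rw [hsum]; omega
  exact hmax _ hmem (Finset.ssubset_insert hC𝒮)

/-- One application of the separator: a clique `K ⊆ A` plus a split of `A \ K` into two
anticomplete halves of controlled size. -/
lemma split (hch : Chordal G) (A : Finset V) :
    ∃ (K A₁ A₂ : Finset V), K ⊆ A ∧ G.IsClique ↑K ∧ A₁ ∪ A₂ = A \ K ∧ Disjoint A₁ A₂ ∧
      (∀ x ∈ A₁, ∀ y ∈ A₂, ¬ G.Adj x y) ∧
      2 * A.card ≤ 4 * A₁.card + 2 * K.card + A.card ∧
      2 * A.card ≤ 4 * A₂.card + 2 * K.card + A.card := by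
  classical
  obtain ⟨K, hKA, hKcl, hKsep⟩ := balanced_sep hch A
  set R := A \ K with hR
  set 𝒞 : Finset (Finset V) := R.image (fun u => comp G R u) with h𝒞
  have hkey : ∀ C ∈ 𝒞, ∀ x ∈ C, C = comp G R x := by
    intro C hC x hx
    obtain ⟨u, huR, rfl⟩ := Finset.mem_image.mp hC
    exact comp_eq_of_mem hx
  have hCsub : ∀ C ∈ 𝒞, C ⊆ R := by
    intro C hC
    obtain ⟨u, huR, rfl⟩ := Finset.mem_image.mp hC
    exact comp_subset
  have hdisj : ∀ C₁ ∈ 𝒞, ∀ C₂ ∈ 𝒞, C₁ ≠ C₂ → Disjoint C₁ C₂ := by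
    intro C₁ h₁ C₂ h₂ hne
    rw [Finset.disjoint_left]
    intro x hx₁ hx₂
    exact hne ((hkey C₁ h₁ x hx₁).trans (hkey C₂ h₂ x hx₂).symm)
  have hbiU : 𝒞.biUnion id = R := by
    ext x
    simp only [Finset.mem_biUnion, id]
    constructor
    · rintro ⟨C, hC, hx⟩; exact hCsub C hC hx
    · intro hx
      exact ⟨comp G R x, Finset.mem_image_of_mem _ hx, self_mem_comp hx⟩
  have hT : ∑ C ∈ 𝒞, C.card = R.card := by
    rw [← hbiU]
    exact (Finset.card_biUnion hdisj).symm
  have hM : ∀ C ∈ 𝒞, 2 * C.card ≤ A.card := by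
    intro C hC
    obtain ⟨u, huR, rfl⟩ := Finset.mem_image.mp hC
    exact hKsep u huR
  obtain ⟨𝒮, h𝒮𝒞, hg₁, hg₂⟩ := greedy 𝒞 A.card hM
  set A₁ := 𝒮.biUnion id with hA₁
  set A₂ := (𝒞 \ 𝒮).biUnion id with hA₂
  have hA₁card : A₁.card = ∑ C ∈ 𝒮, C.card :=
    Finset.card_biUnion (fun C₁ h₁ C₂ h₂ hne => hdisj C₁ (h𝒮𝒞 h₁) C₂ (h𝒮𝒞 h₂) hne)
  have hA₂card : A₂.card = ∑ C ∈ 𝒞 \ 𝒮, C.card :=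
    Finset.card_biUnion (fun C₁ h₁ C₂ h₂ hne =>
      hdisj C₁ (Finset.mem_sdiff.mp h₁).1 C₂ (Finset.mem_sdiff.mp h₂).1 hne)
  have hsum : ∑ C ∈ 𝒞 \ 𝒮, C.card + ∑ C ∈ 𝒮, C.card = ∑ C ∈ 𝒞, C.card :=
    Finset.sum_sdiff h𝒮𝒞
  have hmemA₁ : ∀ x ∈ A₁, x ∈ R ∧ comp G R x ∈ 𝒮 := by
    intro x hx
    obtain ⟨C, hC, hxC⟩ := Finset.mem_biUnion.mp hx
    have hC𝒞 := h𝒮𝒞 hC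
    exact ⟨hCsub C hC𝒞 hxC, (hkey C hC𝒞 x hxC) ▸ hC⟩
  have hmemA₂ : ∀ x ∈ A₂, x ∈ R ∧ comp G R x ∈ 𝒞 \ 𝒮 := by
    intro x hx
    obtain ⟨C, hC, hxC⟩ := Finset.mem_biUnion.mp hx
    exact ⟨hCsub C (Finset.mem_sdiff.mp hC).1 hxC,
      (hkey C (Finset.mem_sdiff.mp hC).1 x hxC) ▸ hC⟩
  refine ⟨K, A₁, A₂, hKA, hKcl, ?_, ?_, ?_, ?_, ?_⟩
  · ext x
    constructor
    · intro hx
      rcases Finset.mem_union.mp hx with h | h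
      · exact (hmemA₁ x h).1
      · exact (hmemA₂ x h).1
    · intro hx
      by_cases hxs : comp G R x ∈ 𝒮
      · exact Finset.mem_union_left _ (Finset.mem_biUnion.mpr ⟨_, hxs, self_mem_comp hx⟩)
      · refine Finset.mem_union_right _ (Finset.mem_biUnion.mpr ⟨comp G R x, ?_, self_mem_comp hx⟩)
        exact Finset.mem_sdiff.mpr ⟨Finset.mem_image_of_mem _ hx, hxs⟩
  · rw [Finset.disjoint_left]
    intro x hx₁ hx₂
    exact (Finset.mem_sdiff.mp (hmemA₂ x hx₂).2).2 (hmemA₁ x hx₁).2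
  · intro x hx y hy hadj
    obtain ⟨hxR, hx𝒮⟩ := hmemA₁ x hx
    obtain ⟨hyR, hy𝒮⟩ := hmemA₂ y hy
    have : y ∈ comp G R x := adj_mem_comp (self_mem_comp hxR) hyR hadj
    rw [comp_eq_of_mem this] at hx𝒮
    exact (Finset.mem_sdiff.mp hy𝒮).2 hx𝒮
  · have hRcard : R.card = A.card - K.card := Finset.card_sdiff_of_subset hKA
    have hKle : K.card ≤ A.card := Finset.card_le_card hKA
    rw [hA₁card]
    omega
  · have hRcard : R.card = A.card - K.card := Finset.card_sdiff_of_subset hKA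
    have hKle : K.card ≤ A.card := Finset.card_le_card hKA
    rw [hA₂card]
    omega


end St4

/-- Let `ε = 1/(4·17⁶·48·192)` and let `G` be a chordal graph on at least
`n - εn` vertices with no clique of size `εn`. Then there is a set `Z` which is the union
of at most 2 cliques and pairwise disjoint, pairwise anticomplete sets `X₁, X₂, X₃`
disjoint from `Z` with `|Xᵢ| = ⌈n/17⌉`. -/
theorem stmt_4 {V : Type*} [Fintype V] [DecidableEq V] (G : SimpleGraph V) (n : ℕ)
    (hchordal : ¬ ∃ (m : ℕ) (v : Fin (m + 4) → V), Function.Injective v ∧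
      ∀ i j : Fin (m + 4), G.Adj (v i) (v j) ↔ (j = i + 1 ∨ i = j + 1))
    (hcard : (n : ℝ) - (1 / (4 * 17 ^ 6 * 48 * 192)) * n ≤ Fintype.card V)
    (hclique : ∀ K : Finset V, G.IsClique (K : Set V) →
      (K.card : ℝ) < (1 / (4 * 17 ^ 6 * 48 * 192)) * n) :
    ∃ (Z : Set V) (X₁ X₂ X₃ : Finset V),
      (∃ K₁ K₂ : Set V, G.IsClique K₁ ∧ G.IsClique K₂ ∧ Z = K₁ ∪ K₂) ∧
      (∀ x ∈ X₁, x ∉ Z) ∧ (∀ x ∈ X₂, x ∉ Z) ∧ (∀ x ∈ X₃, x ∉ Z) ∧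
      Disjoint X₁ X₂ ∧ Disjoint X₁ X₃ ∧ Disjoint X₂ X₃ ∧
      (∀ u ∈ X₁, ∀ v ∈ X₂, ¬ G.Adj u v) ∧
      (∀ u ∈ X₁, ∀ v ∈ X₃, ¬ G.Adj u v) ∧
      (∀ u ∈ X₂, ∀ v ∈ X₃, ¬ G.Adj u v) ∧
      X₁.card = ⌈(n : ℝ) / 17⌉₊ ∧ X₂.card = ⌈(n : ℝ) / 17⌉₊ ∧ X₃.card = ⌈(n : ℝ) / 17⌉₊ := by
  have hch : St4.Chordal G := hchordal
  set e : ℝ := 1 / (4 * 17 ^ 6 * 48 * 192) with he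
  -- `n` is positive
  have hn0 : (0 : ℝ) < e * n := by simpa using hclique ∅ (by simp)
  have hn1 : 1 ≤ n := by
    by_contra hc
    have : n = 0 := by omega
    rw [this] at hn0; simp at hn0
  -- `V` is nonempty, hence `e * n > 1`
  set N := Fintype.card V with hN
  have hNpos : 0 < N := by
    have he1 : e < 1 := by rw [he]; norm_num
    have : (0 : ℝ) < N := by
      have hn1' : (1 : ℝ) ≤ n := by exact_mod_cast hn1
      nlinarith [hcard]
    exact_mod_cast this
  have hen1 : (1 : ℝ) < e * n := by
    obtain ⟨v₀⟩ := Fintype.card_pos_iff.mp hNpos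
    have := hclique {v₀} (by simp)
    simpa using this
  -- first split
  obtain ⟨K₁, P₁, P₂, hK₁A, hK₁cl, hUn₁, hDisj₁, hAnti₁, hP₁, hP₂⟩ :=
    St4.split hch (Finset.univ : Finset V)
  have hUcard : (Finset.univ : Finset V).card = N := rfl
  have hK₁le : K₁.card ≤ N := by rw [← hUcard]; exact Finset.card_le_card hK₁A
  have hPQcard : P₁.card + P₂.card = N - K₁.card := by
    rw [← Finset.card_union_of_disjoint hDisj₁, hUn₁, Finset.card_sdiff_of_subset hK₁A, hUcard]
  -- pick the larger side as B, the other as A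
  obtain ⟨Asm, B, hUn, hDisjAB, hAntiAB, hAbound, hBbound⟩ :
      ∃ P Q : Finset V, P ∪ Q = Finset.univ \ K₁ ∧ Disjoint P Q ∧
        (∀ x ∈ P, ∀ y ∈ Q, ¬ G.Adj x y) ∧
        N ≤ 4 * P.card + 2 * K₁.card ∧ N ≤ 2 * Q.card + K₁.card := by
    rcases le_total P₁.card P₂.card with h | h
    · exact ⟨P₁, P₂, hUn₁, hDisj₁, hAnti₁, by rw [hUcard] at hP₁; omega, by omega⟩
    · refine ⟨P₂, P₁, by rw [Finset.union_comm]; exact hUn₁, hDisj₁.symm,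
        (fun x hx y hy hadj => hAnti₁ y hy x hx hadj.symm), by rw [hUcard] at hP₂; omega,
        by omega⟩
  -- second split, inside B
  obtain ⟨K₂, B₁, B₂, hK₂B, hK₂cl, hUn₂, hDisj₂, hAnti₂, hB₁, hB₂⟩ := St4.split hch B
  have hB₁b : B.card ≤ 4 * B₁.card + 2 * K₂.card := by omega
  have hB₂b : B.card ≤ 4 * B₂.card + 2 * K₂.card := by omega
  -- membership facts
  have hAsmR : ∀ x ∈ Asm, x ∉ K₁ := by
    intro x hx
    have : x ∈ Finset.univ \ K₁ := hUn ▸ Finset.mem_union_left _ hx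
    exact (Finset.mem_sdiff.mp this).2
  have hBR : ∀ x ∈ B, x ∉ K₁ := by
    intro x hx
    have : x ∈ Finset.univ \ K₁ := hUn ▸ Finset.mem_union_right _ hx
    exact (Finset.mem_sdiff.mp this).2
  have hB₁B : ∀ x ∈ B₁, x ∈ B ∧ x ∉ K₂ := by
    intro x hx
    have : x ∈ B \ K₂ := hUn₂ ▸ Finset.mem_union_left _ hx
    exact Finset.mem_sdiff.mp this
  have hB₂B : ∀ x ∈ B₂, x ∈ B ∧ x ∉ K₂ := by
    intro x hx
    have : x ∈ B \ K₂ := hUn₂ ▸ Finset.mem_union_right _ hx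
    exact Finset.mem_sdiff.mp this
  -- numeric bounds
  have hK₁r : (K₁.card : ℝ) < e * n := hclique K₁ hK₁cl
  have hK₂r : (K₂.card : ℝ) < e * n := hclique K₂ hK₂cl
  have hNr : (n : ℝ) - e * n ≤ N := hcard
  set t := ⌈(n : ℝ) / 17⌉₊ with ht
  have htr : (t : ℝ) < n / 17 + 1 := Nat.ceil_lt_add_one (by positivity)
  have hEn : (889807343616 : ℝ) < n := by
    have : e = 1 / 889807343616 := by rw [he]; norm_num
    rw [this] at hen1
    nlinarith [hen1]
  have hcastA : (N : ℝ) ≤ 4 * Asm.card + 2 * K₁.card := by exact_mod_cast hAbound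
  have hcastB : (N : ℝ) ≤ 2 * B.card + K₁.card := by exact_mod_cast hBbound
  have hcastB₁ : (B.card : ℝ) ≤ 4 * B₁.card + 2 * K₂.card := by exact_mod_cast hB₁b
  have hcastB₂ : (B.card : ℝ) ≤ 4 * B₂.card + 2 * K₂.card := by exact_mod_cast hB₂b
  have heval : e = 1 / 889807343616 := by rw [he]; norm_num
  rw [heval] at hK₁r hK₂r hNr
  have htA : t ≤ Asm.card := by
    rw [← Nat.cast_le (α := ℝ)]
    linarith [hNr, hcastA, hK₁r, hEn, htr]
  have htB₁ : t ≤ B₁.card := by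
    rw [← Nat.cast_le (α := ℝ)]
    linarith [hNr, hcastB, hcastB₁, hK₁r, hK₂r, hEn, htr]
  have htB₂ : t ≤ B₂.card := by
    rw [← Nat.cast_le (α := ℝ)]
    linarith [hNr, hcastB, hcastB₂, hK₁r, hK₂r, hEn, htr]
  -- choose the sets
  obtain ⟨X₁, hX₁sub, hX₁card⟩ := Finset.exists_subset_card_eq htA
  obtain ⟨X₂, hX₂sub, hX₂card⟩ := Finset.exists_subset_card_eq htB₁
  obtain ⟨X₃, hX₃sub, hX₃card⟩ := Finset.exists_subset_card_eq htB₂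
  refine ⟨↑K₁ ∪ ↑K₂, X₁, X₂, X₃, ⟨↑K₁, ↑K₂, hK₁cl, hK₂cl, rfl⟩, ?_, ?_, ?_, ?_, ?_, ?_,
    ?_, ?_, ?_, hX₁card, hX₂card, hX₃card⟩
  · intro x hx hxZ
    have hxA := hX₁sub hx
    rcases hxZ with h | h
    · exact hAsmR x hxA (Finset.mem_coe.mp h)
    · have hxK₂ : x ∈ K₂ := Finset.mem_coe.mp h
      exact Finset.disjoint_left.mp hDisjAB hxA (hK₂B hxK₂)
  · intro x hx hxZ
    obtain ⟨hxB, hxK₂⟩ := hB₁B x (hX₂sub hx)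
    rcases hxZ with h | h
    · exact hBR x hxB (Finset.mem_coe.mp h)
    · exact hxK₂ (Finset.mem_coe.mp h)
  · intro x hx hxZ
    obtain ⟨hxB, hxK₂⟩ := hB₂B x (hX₃sub hx)
    rcases hxZ with h | h
    · exact hBR x hxB (Finset.mem_coe.mp h)
    · exact hxK₂ (Finset.mem_coe.mp h)
  · exact Finset.disjoint_left.mpr
      (fun {a} ha ha' => Finset.disjoint_left.mp hDisjAB (hX₁sub ha) (hB₁B a (hX₂sub ha')).1)
  · exact Finset.disjoint_left.mpr
      (fun {a} ha ha' => Finset.disjoint_left.mp hDisjAB (hX₁sub ha) (hB₂B a (hX₃sub ha')).1)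
  · exact Finset.disjoint_left.mpr
      (fun {a} ha ha' => Finset.disjoint_left.mp hDisj₂ (hX₂sub ha) (hX₃sub ha'))
  · exact fun u hu v hv => hAntiAB u (hX₁sub hu) v (hB₁B v (hX₂sub hv)).1
  · exact fun u hu v hv => hAntiAB u (hX₁sub hu) v (hB₂B v (hX₃sub hv)).1
  · exact fun u hu v hv => hAnti₂ u (hX₂sub hu) v (hX₃sub hv)
end

section
/- Let D be a connected graph and b ∈ V(D). For each clique K of D \ {b}, let (A(K), C(K), B(K)) be the b-canonical separation for K. Let 𝒦 be the set of cliques K for which A(K) is maximal under inclusion (among all canonical separations). Then for any two K_1, K_2 ∈ 𝒦 we have C(K_1) ∩ A(K_2) = ∅ and C(K_2) ∩ A(K_1) = ∅. -/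
/-- The component `B(K)` of `D \ K` containing `b`. -/
def bComp {V : Type*} (G : SimpleGraph V) (b : V) (K : Set V) : Set V :=
  {v : V | ∃ (hv : v ∈ Kᶜ) (hb : b ∈ Kᶜ), (G.induce Kᶜ).Reachable ⟨b, hb⟩ ⟨v, hv⟩}

/-- `C(K) = N(B(K))`. -/
def cSet {V : Type*} (G : SimpleGraph V) (b : V) (K : Set V) : Set V :=
  {v : V | v ∉ bComp G b K ∧ ∃ u ∈ bComp G b K, G.Adj u v}

/-- `A(K) = V(D) \ (B(K) ∪ C(K))`. -/
def aSet {V : Type*} (G : SimpleGraph V) (b : V) (K : Set V) : Set V :=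
  (bComp G b K ∪ cSet G b K)ᶜ

/-- `K` is a clique not containing `b` whose canonical separation has `A(K)` maximal. -/
def IsMaxSep {V : Type*} (G : SimpleGraph V) (b : V) (K : Set V) : Prop :=
  G.IsClique K ∧ b ∉ K ∧
    ∀ K' : Set V, G.IsClique K' → b ∉ K' → ¬ (aSet G b K ⊂ aSet G b K')

section aux
variable {V : Type*} {G : SimpleGraph V} {b : V} {K : Set V}

lemma mem_bComp_self (hb : b ∉ K) : b ∈ bComp G b K :=
  ⟨hb, hb, SimpleGraph.Reachable.refl _⟩

lemma adj_bComp {v w : V} (hv : v ∈ bComp G b K) (hadj : G.Adj v w) :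
    w ∈ bComp G b K ∨ w ∈ cSet G b K := by
  by_cases hw : w ∈ bComp G b K
  · exact Or.inl hw
  · exact Or.inr ⟨hw, v, hv, hadj⟩

lemma cSet_subset : cSet G b K ⊆ K := by
  rintro c ⟨hcB, u, hu, hadj⟩
  by_contra hc
  obtain ⟨huK, hbK, hr⟩ := hu
  exact hcB ⟨hc, hbK, hr.trans (SimpleGraph.Adj.reachable (by exact hadj))⟩

lemma bComp_mono {K₁ K₂ : Set V} (hb₁ : b ∉ K₁)
    (hdisj : ∀ z, z ∈ cSet G b K₁ → z ∉ bComp G b K₂) :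
    bComp G b K₂ ⊆ bComp G b K₁ := by
  rintro v ⟨hv, hb₂, hr⟩
  obtain ⟨w⟩ := hr
  suffices h : ∀ (u v : ↥(K₂ᶜ)) (_ : (G.induce K₂ᶜ).Walk u v), (↑u : V) ∈ bComp G b K₂ →
      (↑u : V) ∈ bComp G b K₁ → (↑v : V) ∈ bComp G b K₁ by
    exact h _ _ w (mem_bComp_self hb₂) (mem_bComp_self hb₁)
  intro u v w
  induction w with
  | nil => intro _ h; exact h
  | @cons a c d hadj p ih =>
    intro ha2 ha1
    have hadj' : G.Adj (↑a) (↑c) := hadj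
    have hc2 : (↑c : V) ∈ bComp G b K₂ := by
      obtain ⟨hu, hb2, hr⟩ := ha2
      exact ⟨c.2, hb2, hr.trans (SimpleGraph.Adj.reachable (by exact hadj))⟩
    have hc1 : (↑c : V) ∈ bComp G b K₁ := by
      rcases adj_bComp ha1 hadj' with h | h
      · exact h
      · exact absurd hc2 (hdisj _ h)
    exact ih hc2 hc1

lemma key {K₁ K₂ : Set V} (h₁ : IsMaxSep G b K₁) (h₂ : IsMaxSep G b K₂) :
    cSet G b K₁ ∩ aSet G b K₂ = ∅ := by
  by_contra h
  rw [Set.eq_empty_iff_forall_notMem] at h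
  push_neg at h
  obtain ⟨x, hxC, hxA⟩ := h
  have hxA' : x ∉ bComp G b K₂ ∧ x ∉ cSet G b K₂ := by
    have := hxA
    simp only [aSet, Set.mem_compl_iff, Set.mem_union, not_or] at this
    exact this
  -- C₁ ∩ B₂ = ∅
  have hdisj : ∀ z, z ∈ cSet G b K₁ → z ∉ bComp G b K₂ := by
    intro z hz hzB
    rcases eq_or_ne z x with rfl | hne
    · exact hxA'.1 hzB
    · have hadj : G.Adj z x := h₁.1 (cSet_subset hz) (cSet_subset hxC) hne
      rcases adj_bComp hzB hadj with h | h
      · exact hxA'.1 h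
      · exact hxA'.2 h
  have hB : bComp G b K₂ ⊆ bComp G b K₁ := bComp_mono h₁.2.1 hdisj
  have hC : cSet G b K₂ ⊆ bComp G b K₁ ∪ cSet G b K₁ := by
    rintro c ⟨hcB, u, huB, hadj⟩
    exact adj_bComp (hB huB) hadj
  have hA : aSet G b K₁ ⊆ aSet G b K₂ := by
    apply Set.compl_subset_compl.2
    exact Set.union_subset (hB.trans Set.subset_union_left) hC
  have hxnA1 : x ∉ aSet G b K₁ := fun h => h (Or.inr hxC)
  exact h₁.2.2 K₂ h₂.1 h₂.2.1 ⟨hA, fun h' => hxnA1 (h' hxA)⟩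

end aux

/-- For two cliques `K₁, K₂` whose b-canonical separations have maximal `A`-side,
`C(K₁) ∩ A(K₂) = ∅` and `C(K₂) ∩ A(K₁) = ∅`. -/
theorem stmt_10 {V : Type*} (G : SimpleGraph V) (hG : G.Connected) (b : V)
    (K₁ K₂ : Set V) (h₁ : IsMaxSep G b K₁) (h₂ : IsMaxSep G b K₂) :
    cSet G b K₁ ∩ aSet G b K₂ = ∅ ∧ cSet G b K₂ ∩ aSet G b K₁ = ∅ :=
  ⟨key h₁ h₂, key h₂ h₁⟩
end

section
/- Let G be a graph such that every nonempty induced subgraph of G contains a vertex whose neighborhood is the union of at most two cliques. Then for every vertex set S ⊆ V(G), the clique cover number of S satisfies κ(S) ≤ C(α(S)+1, 2), where α(S) is the maximum size of a stable set in G[S]. -/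
/-- If every nonempty induced subgraph of `G` has a vertex whose neighborhood
is the union of at most two cliques, then for every vertex set `S`, the clique cover number
of `S` is at most `C(α(S)+1, 2)`, where `α(S)` bounds the size of stable sets of `G[S]`. -/
theorem stmt_15 {V : Type*} [Fintype V] [DecidableEq V] (G : SimpleGraph V)
    (hnbhd : ∀ S : Set V, S.Nonempty → ∃ v ∈ S, ∃ K₁ K₂ : Set V,
      K₁ ⊆ S ∧ K₂ ⊆ S ∧ G.IsClique K₁ ∧ G.IsClique K₂ ∧
      G.neighborSet v ∩ S ⊆ K₁ ∪ K₂)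
    (S : Finset V) (a : ℕ)
    (ha : ∀ T : Finset V, T ⊆ S → (∀ u ∈ T, ∀ v ∈ T, u ≠ v → ¬ G.Adj u v) → T.card ≤ a) :
    ∃ F : Finset (Finset V), F.card ≤ (a + 1).choose 2 ∧
      (∀ K ∈ F, G.IsClique (K : Set V) ∧ K ⊆ S) ∧
      ∀ v ∈ S, ∃ K ∈ F, v ∈ K := by
  classical
  induction a generalizing S with
  | zero =>
    refine ⟨∅, by simp, by simp, fun v hv => ?_⟩
    have h1 := ha {v} (by simpa using hv) (by simp)
    simp at h1
  | succ a ih =>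
    by_cases hS : S.Nonempty
    · obtain ⟨v, hvS, K₁, K₂, hK₁S, hK₂S, hK₁, hK₂, hcov⟩ :=
        hnbhd (↑S) (Finset.coe_nonempty.mpr hS)
      have hvS' : v ∈ S := by exact_mod_cast hvS
      obtain _ | b := a
      · -- S is a clique
        refine ⟨{S}, by simp, ?_, fun u hu => ⟨S, by simp, hu⟩⟩
        intro K hK
        simp only [Finset.mem_singleton] at hK
        rw [hK]
        refine ⟨?_, le_refl _⟩
        intro x hx y hy hxy
        by_contra hadj
        have hxS : x ∈ S := hx
        have hyS : y ∈ S := hy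
        have h2 := ha {x, y} (by
            intro z hz
            simp only [Finset.mem_insert, Finset.mem_singleton] at hz
            rcases hz with rfl | rfl <;> assumption)
          (by
            intro u hu w hw huw
            simp only [Finset.mem_insert, Finset.mem_singleton] at hu hw
            rcases hu with rfl | rfl <;> rcases hw with rfl | rfl
            · exact absurd rfl huw
            · exact hadj
            · exact fun h => hadj h.symm
            · exact absurd rfl huw)
        rw [Finset.card_insert_of_notMem (by simpa using hxy), Finset.card_singleton] at h2
        omega
      · set S' : Finset V := S.filter (fun u => ¬ G.Adj v u ∧ u ≠ v) with hS'def
        have hS'sub : S' ⊆ S := Finset.filter_subset _ _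
        have ha' : ∀ T : Finset V, T ⊆ S' →
            (∀ u ∈ T, ∀ w ∈ T, u ≠ w → ¬ G.Adj u w) → T.card ≤ b + 1 := by
          intro T hTsub hTstab
          have hvT : v ∉ T := by
            intro hv
            have := hTsub hv
            simp [hS'def, Finset.mem_filter] at this
          have h2 := ha (insert v T)
            (by
              intro z hz
              rcases Finset.mem_insert.mp hz with rfl | hz
              · exact hvS'
              · exact hS'sub (hTsub hz))
            (by
              intro u hu w hw huw
              rcases Finset.mem_insert.mp hu with hu' | hu' <;>
                rcases Finset.mem_insert.mp hw with hw' | hw'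
              · exact absurd (hu'.trans hw'.symm) huw
              · subst hu'
                exact (Finset.mem_filter.mp (hTsub hw')).2.1
              · subst hw'
                intro h
                exact (Finset.mem_filter.mp (hTsub hu')).2.1 h.symm
              · exact hTstab u hu' w hw' huw)
          rw [Finset.card_insert_of_notMem hvT] at h2
          omega
        obtain ⟨F', hF'card, hF'cl, hF'cov⟩ := ih S' ha'
        set A : Finset V := S.filter (fun u => u ∈ K₁ ∧ G.Adj v u) with hAdef
        set B : Finset V := S.filter (fun u => u ∈ K₂ ∧ G.Adj v u) with hBdef
        refine ⟨insert (insert v A) (insert B F'), ?_, ?_, ?_⟩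
        · have h1 : (insert (insert v A) (insert B F')).card ≤ F'.card + 2 := by
            calc (insert (insert v A) (insert B F')).card
                ≤ (insert B F').card + 1 := Finset.card_insert_le _ _
              _ ≤ F'.card + 1 + 1 := by
                  have := Finset.card_insert_le B F'
                  omega
              _ = F'.card + 2 := by ring
          have h2 : ((b + 1) + 1 + 1).choose 2 = ((b + 1) + 1).choose 2 + ((b + 1) + 1) := by
            rw [Nat.choose_succ_succ, Nat.choose_one_right, Nat.add_comm]
          omega
        · intro K hK
          rcases Finset.mem_insert.mp hK with rfl | hK
          · constructor
            · intro x hx y hy hxy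
              simp only [Finset.coe_insert, Set.mem_insert_iff, Finset.mem_coe,
                hAdef, Finset.mem_filter] at hx hy
              rcases hx with rfl | ⟨hxS, hxK, hxadj⟩ <;>
                rcases hy with rfl | ⟨hyS, hyK, hyadj⟩
              · exact absurd rfl hxy
              · exact hyadj
              · exact hxadj.symm
              · exact hK₁ hxK hyK hxy
            · intro z hz
              rcases Finset.mem_insert.mp hz with rfl | hz
              · exact hvS'
              · exact Finset.filter_subset _ _ hz
          · rcases Finset.mem_insert.mp hK with rfl | hK
            · constructor
              · intro x hx y hy hxy
                simp only [Finset.mem_coe, hBdef, Finset.mem_filter] at hx hy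
                exact hK₂ hx.2.1 hy.2.1 hxy
              · exact Finset.filter_subset _ _
            · obtain ⟨h1, h2⟩ := hF'cl K hK
              exact ⟨h1, h2.trans hS'sub⟩
        · intro u hu
          by_cases huv : u = v
          · exact ⟨insert v A, Finset.mem_insert_self _ _, by simp [huv]⟩
          · by_cases hadj : G.Adj v u
            · have hmem : u ∈ K₁ ∪ K₂ := hcov ⟨hadj, by exact_mod_cast hu⟩
              rcases hmem with hmem | hmem
              · exact ⟨insert v A, Finset.mem_insert_self _ _,
                  Finset.mem_insert_of_mem (by simp [hAdef, hu, hmem, hadj])⟩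
              · exact ⟨B, Finset.mem_insert_of_mem (Finset.mem_insert_self _ _),
                  by simp [hBdef, hu, hmem, hadj]⟩
            · have huS' : u ∈ S' := by
                simp [hS'def, hu, hadj, huv]
              obtain ⟨K, hKF, hKu⟩ := hF'cov u huS'
              exact ⟨K, Finset.mem_insert_of_mem (Finset.mem_insert_of_mem hKF), hKu⟩
    · refine ⟨∅, by simp, by simp, fun u hu => absurd ⟨u, hu⟩ hS⟩
end

section
/- Let Σ be a pyramid in a graph G with apex a, base triangle b_1b_2b_3 and paths P_1, P_2, P_3, and let p be a vertex of G \ Σ that is major for Σ and nonadjacent to a. If G contains no theta, then for i = 1, 2 (where p is anticomplete to P_3), p has a neighbor in P_i \ {b_i}, i.e., N(p) ∩ P_i ≠ {b_i}, unless one of b_1, b_2, b_3 is a loaded pyramid corner. -/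
/-- `q` enumerates an induced path of `G`: vertices are distinct and adjacent iff
consecutive. -/
def IsIndPathFun {V : Type*} (G : SimpleGraph V) {n : ℕ} (q : Fin (n + 1) → V) : Prop :=
  Function.Injective q ∧
    ∀ i j : Fin (n + 1), G.Adj (q i) (q j) ↔ (i.val + 1 = j.val ∨ j.val + 1 = i.val)

/-- A pyramid with apex `a`, base triangle `b₁b₂b₃` and induced paths `q₁, q₂, q₃` from `a`
to `b₁, b₂, b₃` such that the union of any two of the paths (plus the base edge) is a
hole. -/
def IsPyramid {V : Type*} (G : SimpleGraph V) (a b₁ b₂ b₃ : V) {n₁ n₂ n₃ : ℕ}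
    (q₁ : Fin (n₁ + 1) → V) (q₂ : Fin (n₂ + 1) → V) (q₃ : Fin (n₃ + 1) → V) : Prop :=
  IsIndPathFun G q₁ ∧ IsIndPathFun G q₂ ∧ IsIndPathFun G q₃ ∧
  q₁ 0 = a ∧ q₂ 0 = a ∧ q₃ 0 = a ∧
  q₁ (Fin.last n₁) = b₁ ∧ q₂ (Fin.last n₂) = b₂ ∧ q₃ (Fin.last n₃) = b₃ ∧
  G.Adj b₁ b₂ ∧ G.Adj b₂ b₃ ∧ G.Adj b₁ b₃ ∧
  Set.range q₁ ∩ Set.range q₂ = {a} ∧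
  Set.range q₁ ∩ Set.range q₃ = {a} ∧
  Set.range q₂ ∩ Set.range q₃ = {a} ∧
  (∀ u ∈ Set.range q₁, ∀ v ∈ Set.range q₂, u ≠ a → v ≠ a → G.Adj u v → u = b₁ ∧ v = b₂) ∧
  (∀ u ∈ Set.range q₁, ∀ v ∈ Set.range q₃, u ≠ a → v ≠ a → G.Adj u v → u = b₁ ∧ v = b₃) ∧
  (∀ u ∈ Set.range q₂, ∀ v ∈ Set.range q₃, u ≠ a → v ≠ a → G.Adj u v → u = b₂ ∧ v = b₃) ∧
  3 ≤ n₁ + n₂ ∧ 3 ≤ n₁ + n₃ ∧ 3 ≤ n₂ + n₃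

/-- `G` contains a theta: two vertices joined by three internally disjoint induced paths,
each of length at least 2, with pairwise anticomplete interiors. -/
def HasTheta {V : Type*} (G : SimpleGraph V) : Prop :=
  ∃ (x y : V) (n₁ n₂ n₃ : ℕ) (q₁ : Fin (n₁ + 1) → V) (q₂ : Fin (n₂ + 1) → V)
    (q₃ : Fin (n₃ + 1) → V),
    2 ≤ n₁ ∧ 2 ≤ n₂ ∧ 2 ≤ n₃ ∧
    IsIndPathFun G q₁ ∧ IsIndPathFun G q₂ ∧ IsIndPathFun G q₃ ∧
    q₁ 0 = x ∧ q₂ 0 = x ∧ q₃ 0 = x ∧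
    q₁ (Fin.last n₁) = y ∧ q₂ (Fin.last n₂) = y ∧ q₃ (Fin.last n₃) = y ∧
    (∀ u ∈ Set.range q₁ \ {x, y}, ∀ v ∈ Set.range q₂ \ {x, y}, u ≠ v ∧ ¬ G.Adj u v) ∧
    (∀ u ∈ Set.range q₁ \ {x, y}, ∀ v ∈ Set.range q₃ \ {x, y}, u ≠ v ∧ ¬ G.Adj u v) ∧
    (∀ u ∈ Set.range q₂ \ {x, y}, ∀ v ∈ Set.range q₃ \ {x, y}, u ≠ v ∧ ¬ G.Adj u v)

/-- `c` is a loaded pyramid corner of `G`: there is a pyramid with apex `a`, base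
`b₁b₂b₃`, `a` adjacent to `b₂ = c`, together with a path `p` attached as in the definition
of a loaded pyramid. -/
def IsLoadedPyramidCorner {V : Type*} (G : SimpleGraph V) (c : V) : Prop :=
  ∃ (a b₁ b₂ b₃ : V) (n₁ n₃ : ℕ) (q₁ : Fin (n₁ + 1) → V) (q₂ : Fin (1 + 1) → V)
    (q₃ : Fin (n₃ + 1) → V) (k : ℕ) (p : Fin (k + 1) → V),
    IsPyramid G a b₁ b₂ b₃ q₁ q₂ q₃ ∧ c = b₂ ∧ G.Adj a b₂ ∧
    IsIndPathFun G p ∧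
    (∀ w ∈ Set.range p, w ∉ Set.range q₁ ∪ Set.range q₂ ∪ Set.range q₃) ∧
    G.Adj (p 0) b₂ ∧
    (∃ v ∈ Set.range q₁, v ≠ a ∧ v ≠ b₁ ∧ G.Adj (p (Fin.last k)) v) ∧
    (∀ u ∈ Set.range q₃, ∀ w ∈ Set.range p, ¬ G.Adj u w) ∧
    (∀ w ∈ Set.range p, w ≠ p 0 → ¬ G.Adj b₂ w) ∧
    (∀ v ∈ Set.range q₁, v ≠ b₁ → ∀ w ∈ Set.range p, w ≠ p (Fin.last k) → ¬ G.Adj v w)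

/-- `p` is a one-vertex corner path for corner `c` (with the other two base vertices
`d, e` and corner path `Pc` the path of the pyramid ending at `c`, and `Sv` the vertex set
of the pyramid): `p` is adjacent to `d` and `e`, has a neighbor in `Pc \ {c}`, and has no
other neighbors in `Sv \ {c}`. -/
def IsCornerVertex {V : Type*} (G : SimpleGraph V) (p c d e : V) (Pc Sv : Set V) : Prop :=
  G.Adj p d ∧ G.Adj p e ∧ (∃ v ∈ Pc, v ≠ c ∧ G.Adj p v) ∧
    ∀ v ∈ Sv, v ≠ c → G.Adj p v → (v = d ∨ v = e ∨ v ∈ Pc)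

/-- append a vertex at the end of an enumerated path -/
def app1 {V : Type*} {n : ℕ} (q : Fin (n + 1) → V) (b : V) : Fin (n + 2) → V :=
  fun i => if h : i.val < n + 1 then q ⟨i.val, h⟩ else b

lemma app1_lt {V : Type*} {n : ℕ} (q : Fin (n + 1) → V) (b : V) {i : Fin (n + 2)}
    (h : i.val < n + 1) : app1 q b i = q ⟨i.val, h⟩ := dif_pos h

lemma app1_ge {V : Type*} {n : ℕ} (q : Fin (n + 1) → V) (b : V) {i : Fin (n + 2)}
    (h : ¬ i.val < n + 1) : app1 q b i = b := dif_neg h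

lemma app1_zero {V : Type*} {n : ℕ} (q : Fin (n + 1) → V) (b : V) :
    app1 q b 0 = q 0 := by
  rw [app1_lt q b (i := 0) (by simp)]
  congr 1

lemma app1_last {V : Type*} {n : ℕ} (q : Fin (n + 1) → V) (b : V) :
    app1 q b (Fin.last (n + 1)) = b := app1_ge q b (by simp)

lemma range_app1 {V : Type*} {n : ℕ} (q : Fin (n + 1) → V) (b : V) :
    Set.range (app1 q b) = Set.range q ∪ {b} := by
  ext x
  simp only [Set.mem_range, Set.mem_union, Set.mem_singleton_iff]
  constructor
  · rintro ⟨i, hi⟩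
    by_cases h : i.val < n + 1
    · rw [app1_lt q b h] at hi; exact Or.inl ⟨_, hi⟩
    · rw [app1_ge q b h] at hi; exact Or.inr hi.symm
  · rintro (⟨i, hi⟩ | rfl)
    · refine ⟨⟨i.val, by omega⟩, ?_⟩
      rw [app1_lt q b (i := ⟨i.val, by omega⟩) (by exact i.isLt)]
      simpa
    · exact ⟨Fin.last (n + 1), app1_last _ _⟩

lemma indpath_app1 {V : Type*} {G : SimpleGraph V} {n : ℕ} {q : Fin (n + 1) → V}
    (hq : IsIndPathFun G q) {b : V} (hb : b ∉ Set.range q)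
    (hadj : ∀ i : Fin (n + 1), G.Adj (q i) b ↔ i.val = n) :
    IsIndPathFun G (app1 q b) := by
  constructor
  · intro i j hij
    by_cases h1 : i.val < n + 1 <;> by_cases h2 : j.val < n + 1
    · rw [app1_lt q b h1, app1_lt q b h2] at hij
      have h' := hq.1 hij
      simp only [Fin.mk.injEq] at h'
      exact Fin.ext h'
    · rw [app1_lt q b h1, app1_ge q b h2] at hij
      exact absurd ⟨_, hij⟩ hb
    · rw [app1_ge q b h1, app1_lt q b h2] at hij
      exact absurd ⟨_, hij.symm⟩ hb
    · exact Fin.ext (by omega)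
  · intro i j
    by_cases h1 : i.val < n + 1 <;> by_cases h2 : j.val < n + 1
    · rw [app1_lt q b h1, app1_lt q b h2, hq.2]
    · rw [app1_lt q b h1, app1_ge q b h2, hadj]
      show i.val = n ↔ _
      omega
    · rw [app1_ge q b h1, app1_lt q b h2, G.adj_comm, hadj]
      show j.val = n ↔ _
      omega
    · rw [app1_ge q b h1, app1_ge q b h2]
      constructor
      · intro h; exact absurd h (G.irrefl)
      · omega

lemma indpath_trunc {V : Type*} {G : SimpleGraph V} {n m : ℕ} (h : m ≤ n)
    {q : Fin (n + 1) → V} (hq : IsIndPathFun G q) :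
    IsIndPathFun G (fun i : Fin (m + 1) => q ⟨i.val, by omega⟩) := by
  constructor
  · intro i j hij
    have h' := hq.1 hij
    simp only [Fin.mk.injEq] at h'
    exact Fin.ext h'
  · intro i j
    rw [hq.2]

lemma theta_aux {V : Type*} (G : SimpleGraph V) (a bA bB b₃ : V) {nA nB n₃ : ℕ}
    (qA : Fin (nA + 1) → V) (qB : Fin (nB + 1) → V) (q₃ : Fin (n₃ + 1) → V) (p : V)
    (hA : IsIndPathFun G qA) (hB : IsIndPathFun G qB) (h3 : IsIndPathFun G q₃)
    (hA0 : qA 0 = a) (hB0 : qB 0 = a) (h30 : q₃ 0 = a)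
    (hAl : qA (Fin.last nA) = bA) (hBl : qB (Fin.last nB) = bB)
    (h3l : q₃ (Fin.last n₃) = b₃)
    (hiAB : Set.range qA ∩ Set.range qB = {a})
    (hiA3 : Set.range qA ∩ Set.range q₃ = {a})
    (hiB3 : Set.range qB ∩ Set.range q₃ = {a})
    (haAB : ∀ u ∈ Set.range qA, ∀ v ∈ Set.range qB, u ≠ a → v ≠ a → G.Adj u v →
      u = bA ∧ v = bB)
    (haA3 : ∀ u ∈ Set.range qA, ∀ v ∈ Set.range q₃, u ≠ a → v ≠ a → G.Adj u v →
      u = bA ∧ v = b₃)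
    (haB3 : ∀ u ∈ Set.range qB, ∀ v ∈ Set.range q₃, u ≠ a → v ≠ a → G.Adj u v →
      u = bB ∧ v = b₃)
    (hbA3 : G.Adj bA b₃)
    (hp : p ∉ Set.range qA ∪ Set.range qB ∪ Set.range q₃)
    (hpbA : G.Adj p bA)
    (hpA : ∀ v ∈ Set.range qA, G.Adj p v → v = bA)
    (hp3 : ∀ v ∈ Set.range q₃, ¬ G.Adj p v)
    (hpa : ¬ G.Adj p a)
    (hw : ∃ j : Fin (nB + 1), j.val ≠ 0 ∧ j.val ≠ nB ∧ G.Adj p (qB j))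
    (hnA : 2 ≤ nA) (hn3 : 1 ≤ n₃) : HasTheta G := by
  classical
  have hbAa : bA ≠ a := fun h => hpa (h ▸ hpbA)
  have hb3a : b₃ ≠ a := by
    intro h
    have : G.Adj bA a := h ▸ hbA3
    rw [← hAl, ← hA0, hA.2] at this
    simp [Fin.last] at this
    omega
  have haAdjbA : ¬ G.Adj a bA := by
    rw [← hA0, ← hAl, hA.2]
    simp [Fin.last]
    omega
  obtain ⟨jw, hjw0, hjwn, hjwadj⟩ := hw
  have hex : ∃ j : ℕ, ∃ h : j < nB + 1, G.Adj p (qB ⟨j, h⟩) := ⟨jw.1, jw.2, hjwadj⟩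
  set u := Nat.find hex with hu_def
  obtain ⟨hultn, hadju⟩ := Nat.find_spec hex
  have hule : u ≤ jw.val := Nat.find_le ⟨jw.2, hjwadj⟩
  have hultB : u < nB := by have := jw.2; omega
  have humin : ∀ m, (hm : m < u) → ¬ G.Adj p (qB ⟨m, by omega⟩) := by
    intro m hm hadj
    exact Nat.find_min hex hm ⟨by omega, hadj⟩
  have hupos : 0 < u := by
    rcases Nat.eq_zero_or_pos u with h | h
    · exfalso
      apply hpa
      rw [← hB0]
      have : (⟨u, hultn⟩ : Fin (nB + 1)) = 0 := by
        apply Fin.ext; simp [h]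
      rwa [this] at hadju
    · exact h
  -- the truncated path along qB up to index u
  set tr : Fin (u + 1) → V := fun i => qB ⟨i.val, by omega⟩ with htr_def
  have htr : IsIndPathFun G tr := indpath_trunc (by omega) hB
  have htr_sub : Set.range tr ⊆ Set.range qB := by
    rintro _ ⟨i, rfl⟩; exact ⟨⟨i.val, by omega⟩, rfl⟩
  have hbAnotB : bA ∉ Set.range qB := by
    intro hmem
    have : bA ∈ Set.range qA ∩ Set.range qB := ⟨⟨Fin.last nA, hAl⟩, hmem⟩
    rw [hiAB] at this
    exact hbAa this
  have hbAnot3 : bA ∉ Set.range q₃ := by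
    intro hmem
    have : bA ∈ Set.range qA ∩ Set.range q₃ := ⟨⟨Fin.last nA, hAl⟩, hmem⟩
    rw [hiA3] at this
    exact hbAa this
  have hpnotB : p ∉ Set.range tr := fun hmem => hp (Or.inl (Or.inr (htr_sub hmem)))
  have h1 : IsIndPathFun G (app1 tr p) := by
    apply indpath_app1 htr hpnotB
    intro i
    constructor
    · intro hadj
      by_contra hne
      have hlt : i.val < u := by omega
      exact humin i.val hlt hadj.symm
    · intro hv
      have : (⟨i.val, by omega⟩ : Fin (nB + 1)) = ⟨u, hultn⟩ := Fin.ext hv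
      show G.Adj (qB _) p
      rw [this]
      exact hadju.symm
  have hbAnottr : bA ∉ Set.range (app1 tr p) := by
    rw [range_app1]
    rintro (hmem | hmem)
    · exact hbAnotB (htr_sub hmem)
    · exact hp (Or.inl (Or.inl (hmem ▸ ⟨Fin.last nA, hAl⟩)))
  have hqBne_a : ∀ j : Fin (nB + 1), j.val ≠ 0 → qB j ≠ a := by
    intro j hj h
    apply hj
    have : j = 0 := hB.1 (by rw [h, hB0])
    exact congrArg Fin.val this
  have hqBne_bB : ∀ j : Fin (nB + 1), j.val ≠ nB → qB j ≠ bB := by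
    intro j hj h
    apply hj
    have : j = Fin.last nB := hB.1 (by rw [h, hBl])
    exact congrArg Fin.val this
  have hnoadjB : ∀ j : ℕ, (hlt : j < nB + 1) → j ≤ u → ¬ G.Adj (qB ⟨j, hlt⟩) bA := by
    intro j hlt hj hadj
    by_cases hj0 : j = 0
    · subst hj0
      apply haAdjbA
      have h00 : (⟨0, hlt⟩ : Fin (nB + 1)) = 0 := Fin.ext rfl
      rwa [h00, hB0] at hadj
    · have hne1 : j ≠ nB := by omega
      have := haAB bA ⟨Fin.last nA, hAl⟩ _ ⟨⟨j, hlt⟩, rfl⟩ hbAa (hqBne_a ⟨j, hlt⟩ hj0)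
        hadj.symm
      exact hqBne_bB ⟨j, hlt⟩ hne1 this.2
  have h2 : IsIndPathFun G (app1 (app1 tr p) bA) := by
    apply indpath_app1 h1 hbAnottr
    intro i
    by_cases hi : i.val < u + 1
    · rw [app1_lt tr p hi]
      apply iff_of_false
      · exact hnoadjB i.val (by omega) (by omega)
      · omega
    · rw [app1_ge tr p hi]
      have hiv : i.val = u + 1 := by omega
      rw [hiv]
      exact iff_of_true hpbA rfl
  have h3' : IsIndPathFun G (app1 q₃ bA) := by
    apply indpath_app1 h3 hbAnot3
    intro i
    constructor
    · intro hadj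
      by_contra hne
      by_cases hi0 : i.val = 0
      · apply haAdjbA
        have : i = 0 := Fin.ext hi0
        rwa [this, h30] at hadj
      · have hne_a : q₃ i ≠ a := by
          intro h
          apply hi0
          have : i = 0 := h3.1 (by rw [h, h30])
          exact congrArg Fin.val this
        have := haA3 bA ⟨Fin.last nA, hAl⟩ (q₃ i) ⟨i, rfl⟩ hbAa hne_a hadj.symm
        apply hne
        have : i = Fin.last n₃ := h3.1 (by rw [this.2, h3l])
        exact congrArg Fin.val this
    · intro hv
      have : i = Fin.last n₃ := Fin.ext hv
      rw [this, h3l]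
      exact hbA3.symm
  -- assemble the theta between a and bA
  refine ⟨a, bA, nA, u + 2, n₃ + 1, qA, app1 (app1 tr p) bA, app1 q₃ bA,
    hnA, by omega, by omega, hA, h2, h3', hA0, ?_, ?_, hAl, ?_, ?_, ?_, ?_, ?_⟩
  · rw [app1_zero, app1_zero]
    show qB _ = a
    rw [← hB0]
    congr 1
  · rw [app1_zero, h30]
  · exact app1_last _ _
  · exact app1_last _ _
  · -- qA vs path2
    rintro x ⟨hxA, hxne⟩ y ⟨hyr, hyne⟩
    simp only [Set.mem_insert_iff, Set.mem_singleton_iff, not_or] at hxne hyne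
    obtain ⟨hxa, hxbA⟩ := hxne
    obtain ⟨hya, hybA⟩ := hyne
    rw [range_app1, range_app1] at hyr
    rcases hyr with (hyt | hyp) | hyb
    · obtain ⟨i, rfl⟩ := hyt
      have hymem : tr i ∈ Set.range qB := htr_sub ⟨i, rfl⟩
      constructor
      · intro h
        have : x ∈ Set.range qA ∩ Set.range qB := ⟨hxA, h ▸ hymem⟩
        rw [hiAB] at this
        exact hxa this
      · intro h
        exact hxbA (haAB x hxA (tr i) hymem hxa hya h).1
    · subst hyp
      constructor
      · intro h; exact hp (Or.inl (Or.inl (h ▸ hxA)))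
      · intro h; exact hxbA (hpA x hxA h.symm)
    · exact absurd hyb hybA
  · -- qA vs path3
    rintro x ⟨hxA, hxne⟩ y ⟨hyr, hyne⟩
    simp only [Set.mem_insert_iff, Set.mem_singleton_iff, not_or] at hxne hyne
    obtain ⟨hxa, hxbA⟩ := hxne
    obtain ⟨hya, hybA⟩ := hyne
    rw [range_app1] at hyr
    rcases hyr with hy3 | hyb
    · constructor
      · intro h
        have : x ∈ Set.range qA ∩ Set.range q₃ := ⟨hxA, h ▸ hy3⟩
        rw [hiA3] at this
        exact hxa this
      · intro h
        exact hxbA (haA3 x hxA y hy3 hxa hya h).1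
    · exact absurd hyb hybA
  · -- path2 vs path3
    rintro x ⟨hxr, hxne⟩ y ⟨hyr, hyne⟩
    simp only [Set.mem_insert_iff, Set.mem_singleton_iff, not_or] at hxne hyne
    obtain ⟨hxa, hxbA⟩ := hxne
    obtain ⟨hya, hybA⟩ := hyne
    rw [range_app1, range_app1] at hxr
    rw [range_app1] at hyr
    rcases hyr with hy3 | hyb
    swap
    · exact absurd hyb hybA
    rcases hxr with (hxt | hxp) | hxb
    · obtain ⟨i, rfl⟩ := hxt
      have hxmem : tr i ∈ Set.range qB := htr_sub ⟨i, rfl⟩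
      constructor
      · intro h
        have : tr i ∈ Set.range qB ∩ Set.range q₃ := ⟨hxmem, h ▸ hy3⟩
        rw [hiB3] at this
        exact hxa this
      · intro h
        have := (haB3 (tr i) hxmem y hy3 hxa hya h).1
        have hne1 : i.val ≠ nB := by have := i.isLt; omega
        exact hqBne_bB ⟨i.val, by omega⟩ hne1 this
    · subst hxp
      constructor
      · intro h; exact hp (Or.inr (h ▸ hy3))
      · intro h; exact hp3 y hy3 h
    · exact absurd hxb hxbA

lemma pyramid_swap {V : Type*} {G : SimpleGraph V} {a b₁ b₂ b₃ : V} {n₁ n₂ n₃ : ℕ}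
    {q₁ : Fin (n₁ + 1) → V} {q₂ : Fin (n₂ + 1) → V} {q₃ : Fin (n₃ + 1) → V}
    (h : IsPyramid G a b₁ b₂ b₃ q₁ q₂ q₃) : IsPyramid G a b₂ b₁ b₃ q₂ q₁ q₃ := by
  obtain ⟨h1, h2, h3, h10, h20, h30, h1l, h2l, h3l, hb12, hb23, hb13, hi12, hi13, hi23,
    ha12, ha13, ha23, hl1, hl2, hl3⟩ := h
  refine ⟨h2, h1, h3, h20, h10, h30, h2l, h1l, h3l, hb12.symm, hb13, hb23,
    by rw [Set.inter_comm]; exact hi12, hi23, hi13, ?_, ha23, ha13, by omega, by omega,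
    by omega⟩
  intro u hu v hv hua hva hadj
  have := ha12 v hv u hu hva hua hadj.symm
  exact ⟨this.2, this.1⟩

lemma loaded_aux {V : Type*} (G : SimpleGraph V) (a B₁ B₂ B₃ : V) {m₁ m₃ : ℕ}
    (Q₁ : Fin (m₁ + 1) → V) (Q₂ : Fin (1 + 1) → V) (Q₃ : Fin (m₃ + 1) → V) (p : V)
    (hpyr : IsPyramid G a B₁ B₂ B₃ Q₁ Q₂ Q₃)
    (hp : p ∉ Set.range Q₁ ∪ Set.range Q₂ ∪ Set.range Q₃)
    (hpB2 : G.Adj p B₂)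
    (hv : ∃ v ∈ Set.range Q₁, v ≠ a ∧ v ≠ B₁ ∧ G.Adj p v)
    (hp3 : ∀ u ∈ Set.range Q₃, ¬ G.Adj u p) : IsLoadedPyramidCorner G B₂ := by
  have haB2 : G.Adj a B₂ := by
    have h20 := hpyr.2.2.2.2.1
    have h2l := hpyr.2.2.2.2.2.2.2.1
    have := (hpyr.2.1.2 0 (Fin.last 1)).mpr (Or.inl rfl)
    rwa [h20, h2l] at this
  refine ⟨a, B₁, B₂, B₃, m₁, m₃, Q₁, Q₂, Q₃, 0, fun _ => p, hpyr, rfl, haB2, ?_, ?_,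
    hpB2, ?_, ?_, ?_, ?_⟩
  · constructor
    · intro i j _
      exact Fin.ext (by omega)
    · intro i j
      apply iff_of_false G.irrefl
      have hi : i.val = 0 := by omega
      have hj : j.val = 0 := by omega
      omega
  · intro w hw
    obtain ⟨_, rfl⟩ := hw
    exact hp
  · obtain ⟨v, hv1, hv2, hv3, hv4⟩ := hv
    exact ⟨v, hv1, hv2, hv3, hv4⟩
  · intro u hu w hw
    obtain ⟨_, rfl⟩ := hw
    exact hp3 u hu
  · intro w hw hne
    obtain ⟨_, rfl⟩ := hw
    exact absurd rfl hne
  · intro v _ _ w hw hne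
    obtain ⟨_, rfl⟩ := hw
    exact absurd rfl hne

/-- Let `Σ` be a pyramid in `G` with apex `a` and let `p ∉ Σ` be major for
`Σ` (its neighborhood in `Σ` is not local and it is not a corner path), nonadjacent to `a`
and anticomplete to `P₃`. If `G` contains no theta, then `N(p) ∩ Pᵢ ≠ {bᵢ}` for `i = 1, 2`,
unless one of `b₁, b₂, b₃` is a loaded pyramid corner. -/
theorem stmt_17 {V : Type*} (G : SimpleGraph V) (a b₁ b₂ b₃ : V) {n₁ n₂ n₃ : ℕ}
    (q₁ : Fin (n₁ + 1) → V) (q₂ : Fin (n₂ + 1) → V) (q₃ : Fin (n₃ + 1) → V)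
    (hpyr : IsPyramid G a b₁ b₂ b₃ q₁ q₂ q₃) (p : V)
    (hpout : p ∉ Set.range q₁ ∪ Set.range q₂ ∪ Set.range q₃)
    (hnotlocal :
      ¬ (({v ∈ Set.range q₁ ∪ Set.range q₂ ∪ Set.range q₃ | G.Adj p v} ⊆ Set.range q₁) ∨
         ({v ∈ Set.range q₁ ∪ Set.range q₂ ∪ Set.range q₃ | G.Adj p v} ⊆ Set.range q₂) ∨
         ({v ∈ Set.range q₁ ∪ Set.range q₂ ∪ Set.range q₃ | G.Adj p v} ⊆ Set.range q₃) ∨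
         ({v ∈ Set.range q₁ ∪ Set.range q₂ ∪ Set.range q₃ | G.Adj p v} ⊆
            ({b₁, b₂, b₃} : Set V))))
    (hnotcorner :
      ¬ (IsCornerVertex G p b₁ b₂ b₃ (Set.range q₁)
            (Set.range q₁ ∪ Set.range q₂ ∪ Set.range q₃) ∨
         IsCornerVertex G p b₂ b₁ b₃ (Set.range q₂)
            (Set.range q₁ ∪ Set.range q₂ ∪ Set.range q₃) ∨
         IsCornerVertex G p b₃ b₁ b₂ (Set.range q₃)
            (Set.range q₁ ∪ Set.range q₂ ∪ Set.range q₃)))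
    (hpa : ¬ G.Adj p a)
    (hp3 : ∀ v ∈ Set.range q₃, ¬ G.Adj p v)
    (htheta : ¬ HasTheta G) :
    IsLoadedPyramidCorner G b₁ ∨ IsLoadedPyramidCorner G b₂ ∨ IsLoadedPyramidCorner G b₃ ∨
      (({v : V | G.Adj p v} ∩ Set.range q₁ ≠ {b₁}) ∧
       ({v : V | G.Adj p v} ∩ Set.range q₂ ≠ {b₂})) := by
  classical
  obtain ⟨h1, h2, h3, h10, h20, h30, h1l, h2l, h3l, hb12, hb23, hb13, hi12, hi13, hi23,
    ha12, ha13, ha23, hl1, hl2, hl3⟩ := id hpyr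
  have hD4 : ¬ ({v ∈ Set.range q₁ ∪ Set.range q₂ ∪ Set.range q₃ | G.Adj p v} ⊆
      ({b₁, b₂, b₃} : Set V)) := fun h => hnotlocal (Or.inr (Or.inr (Or.inr h)))
  obtain ⟨w, hwS, hwc⟩ := Set.not_subset.1 hD4
  obtain ⟨hwmem, hwadj⟩ := hwS
  simp only [Set.mem_insert_iff, Set.mem_singleton_iff, not_or] at hwc
  obtain ⟨hwb1, hwb2, hwb3⟩ := hwc
  have hwa : w ≠ a := fun h => hpa (h ▸ hwadj)
  by_cases hA : {v : V | G.Adj p v} ∩ Set.range q₁ = {b₁}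
  · -- Case A : N(p) ∩ P₁ = {b₁}
    have hpb₁ : G.Adj p b₁ := by
      have hb : b₁ ∈ ({b₁} : Set V) := rfl
      rw [← hA] at hb
      exact hb.1
    have hNin : ∀ v ∈ Set.range q₁, G.Adj p v → v = b₁ := by
      intro v hv hadj
      have : v ∈ {v : V | G.Adj p v} ∩ Set.range q₁ := ⟨hadj, hv⟩
      rwa [hA, Set.mem_singleton_iff] at this
    have hwq2 : w ∈ Set.range q₂ := by
      rcases hwmem with (h | h) | h
      · exact absurd (hNin w h hwadj) hwb1
      · exact h
      · exact absurd hwadj (hp3 w h)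
    have hb₁a : b₁ ≠ a := fun h => hpa (h ▸ hpb₁)
    cases n₁ with
    | zero =>
      exact absurd (by rw [← h1l, ← h10]; exact congrArg q₁ (Fin.ext (by simp))) hb₁a
    | succ m =>
      cases m with
      | zero =>
        have hp' : p ∉ Set.range q₂ ∪ Set.range q₁ ∪ Set.range q₃ := by
          intro h
          apply hpout
          rcases h with (h | h) | h
          · exact Or.inl (Or.inr h)
          · exact Or.inl (Or.inl h)
          · exact Or.inr h
        exact Or.inl (loaded_aux G a b₂ b₁ b₃ q₂ q₁ q₃ p (pyramid_swap hpyr) hp' hpb₁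
          ⟨w, hwq2, hwa, hwb2, hwadj⟩ (fun u hu h => hp3 u hu h.symm))
      | succ m' =>
        exfalso
        apply htheta
        have hnadj : ¬ G.Adj b₁ a := by
          rw [← h1l, ← h10, h1.2]
          simp [Fin.last]
        have hn3 : 1 ≤ n₃ := by
          by_contra h
          have hn0 : n₃ = 0 := by omega
          subst hn0
          have hba : b₃ = a := by
            rw [← h3l, ← h30]
            exact congrArg q₃ (Fin.ext (by simp))
          exact hnadj (hba ▸ hb13)
        obtain ⟨j, rfl⟩ := hwq2
        refine theta_aux G a b₁ b₂ b₃ q₁ q₂ q₃ p h1 h2 h3 h10 h20 h30 h1l h2l h3l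
          hi12 hi13 hi23 ha12 ha13 ha23 hb13 hpout hpb₁ hNin hp3 hpa
          ⟨j, ?_, ?_, hwadj⟩ (by omega) hn3
        · intro h
          exact hwa (by rw [show j = 0 from Fin.ext h, h20])
        · intro h
          exact hwb2 (by rw [show j = Fin.last n₂ from Fin.ext h, h2l])
  by_cases hB : {v : V | G.Adj p v} ∩ Set.range q₂ = {b₂}
  · -- Case B : N(p) ∩ P₂ = {b₂}
    have hpb₂ : G.Adj p b₂ := by
      have hb : b₂ ∈ ({b₂} : Set V) := rfl
      rw [← hB] at hb
      exact hb.1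
    have hNin : ∀ v ∈ Set.range q₂, G.Adj p v → v = b₂ := by
      intro v hv hadj
      have : v ∈ {v : V | G.Adj p v} ∩ Set.range q₂ := ⟨hadj, hv⟩
      rwa [hB, Set.mem_singleton_iff] at this
    have hwq1 : w ∈ Set.range q₁ := by
      rcases hwmem with (h | h) | h
      · exact h
      · exact absurd (hNin w h hwadj) hwb2
      · exact absurd hwadj (hp3 w h)
    have hb₂a : b₂ ≠ a := fun h => hpa (h ▸ hpb₂)
    cases n₂ with
    | zero =>
      exact absurd (by rw [← h2l, ← h20]; exact congrArg q₂ (Fin.ext (by simp))) hb₂a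
    | succ m =>
      cases m with
      | zero =>
        exact Or.inr (Or.inl (loaded_aux G a b₁ b₂ b₃ q₁ q₂ q₃ p hpyr hpout hpb₂
          ⟨w, hwq1, hwa, hwb1, hwadj⟩ (fun u hu h => hp3 u hu h.symm)))
      | succ m' =>
        exfalso
        apply htheta
        have hnadj : ¬ G.Adj b₂ a := by
          rw [← h2l, ← h20, h2.2]
          simp [Fin.last]
        have hn3 : 1 ≤ n₃ := by
          by_contra h
          have hn0 : n₃ = 0 := by omega
          subst hn0
          have hba : b₃ = a := by
            rw [← h3l, ← h30]
            exact congrArg q₃ (Fin.ext (by simp))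
          exact hnadj (hba ▸ hb23)
        have hp' : p ∉ Set.range q₂ ∪ Set.range q₁ ∪ Set.range q₃ := by
          intro h
          apply hpout
          rcases h with (h | h) | h
          · exact Or.inl (Or.inr h)
          · exact Or.inl (Or.inl h)
          · exact Or.inr h
        have hiBA : Set.range q₂ ∩ Set.range q₁ = {a} := by
          rw [Set.inter_comm]; exact hi12
        have haBA : ∀ u ∈ Set.range q₂, ∀ v ∈ Set.range q₁, u ≠ a → v ≠ a → G.Adj u v →
            u = b₂ ∧ v = b₁ := by
          intro u hu v hv hua hva hadj
          have := ha12 v hv u hu hva hua hadj.symm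
          exact ⟨this.2, this.1⟩
        obtain ⟨j, rfl⟩ := hwq1
        refine theta_aux G a b₂ b₁ b₃ q₂ q₁ q₃ p h2 h1 h3 h20 h10 h30 h2l h1l h3l
          hiBA hi23 hi13 haBA ha23 ha13 hb23 hp' hpb₂ hNin hp3 hpa
          ⟨j, ?_, ?_, hwadj⟩ (by omega) hn3
        · intro h
          exact hwa (by rw [show j = 0 from Fin.ext h, h10])
        · intro h
          exact hwb1 (by rw [show j = Fin.last n₁ from Fin.ext h, h1l])
  exact Or.inr (Or.inr (Or.inr ⟨hA, hB⟩))
end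

section
/- Let G be a graph, c ∈ [1/2, 1), and d a positive integer. Suppose that for every normal weight function w on V(G) (i.e., w : V(G) → [0,1] with total weight 1) there is a set X_w ⊆ V(G) with independence number α(X_w) ≤ d such that every connected component of G \ X_w has w-weight at most c. Then G has a tree decomposition in which every bag has independence number at most ((3−c)/(1−c))·d; in particular the tree independence number of G is at most ((3−c)/(1−c))·d. -/
open SimpleGraph Finset

section Infra
variable {V : Type} [Fintype V] [DecidableEq V] {G : SimpleGraph V}
set_option linter.unusedSectionVars false

/-- Independent finset predicate matching the statement. -/
private def IndepF (G : SimpleGraph V) (S : Finset V) : Prop :=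
  ∀ u ∈ S, ∀ v ∈ S, u ≠ v → ¬ G.Adj u v

private lemma indepF_mono {S T : Finset V} (h : S ⊆ T) (hT : IndepF G T) : IndepF G S :=
  fun u hu v hv => hT u (h hu) v (h hv)

private lemma exists_max_indep (G : SimpleGraph V) (W : Finset V) :
    ∃ I ⊆ W, IndepF G I ∧ ∀ J ⊆ W, IndepF G J → J.card ≤ I.card := by
  classical
  have hne : (W.powerset.filter (fun S => IndepF G S)).Nonempty := by
    refine ⟨∅, ?_⟩
    exact Finset.mem_filter.2 ⟨Finset.empty_mem_powerset _, by simp [IndepF]⟩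
  obtain ⟨I, hI, hImax⟩ := (W.powerset.filter (fun S => IndepF G S)).exists_max_image
    Finset.card hne
  simp only [Finset.mem_filter, Finset.mem_powerset] at hI
  exact ⟨I, hI.1, hI.2, fun J hJ hJind => hImax J (by simp [Finset.mem_filter,
    Finset.mem_powerset, hJ, hJind])⟩

/-- Reachability within a vertex set. -/
private def RelIn (G : SimpleGraph V) (A : Finset V) (u v : V) : Prop :=
  ∃ p : G.Walk u v, ∀ z ∈ p.support, z ∈ A

private lemma relIn_refl {A : Finset V} {u : V} (hu : u ∈ A) : RelIn G A u u :=
  ⟨Walk.nil, by simp [hu]⟩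

private lemma relIn_symm {A : Finset V} {u v : V} (h : RelIn G A u v) : RelIn G A v u := by
  obtain ⟨p, hp⟩ := h
  exact ⟨p.reverse, by simpa [Walk.support_reverse] using hp⟩

private lemma relIn_trans {A : Finset V} {u v x : V} (h : RelIn G A u v)
    (h' : RelIn G A v x) : RelIn G A u x := by
  obtain ⟨p, hp⟩ := h
  obtain ⟨q, hq⟩ := h'
  refine ⟨p.append q, fun z hz => ?_⟩
  rw [Walk.mem_support_append_iff] at hz
  exact hz.elim (hp z) (hq z)

private lemma relIn_adj {A : Finset V} {u v : V} (hu : u ∈ A) (hv : v ∈ A)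
    (h : G.Adj u v) : RelIn G A u v :=
  ⟨Walk.cons h Walk.nil, by simp [hu, hv]⟩

private lemma relIn_of_support {A : Finset V} {u v : V} (p : G.Walk u v)
    (hp : ∀ z ∈ p.support, z ∈ A) : ∀ z ∈ p.support, RelIn G A u z := by
  intro z hz
  exact ⟨p.takeUntil z hz, fun y hy => hp y (Walk.support_takeUntil_subset p hz hy)⟩

open Classical in
/-- Connected component of `u` within the finset `A`. -/
private noncomputable def compIn (G : SimpleGraph V) (A : Finset V) (u : V) : Finset V :=
  A.filter (RelIn G A u)

private lemma mem_compIn {A : Finset V} {u v : V} :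
    v ∈ compIn G A u ↔ v ∈ A ∧ RelIn G A u v := by
  classical
  simp [compIn]

private lemma compIn_subset {A : Finset V} {u : V} : compIn G A u ⊆ A :=
  fun _ hx => (mem_compIn.1 hx).1

private lemma self_mem_compIn {A : Finset V} {u : V} (hu : u ∈ A) : u ∈ compIn G A u :=
  mem_compIn.2 ⟨hu, relIn_refl hu⟩

private lemma compIn_eq_of_mem {A : Finset V} {u v : V} (hv : v ∈ compIn G A u) :
    compIn G A v = compIn G A u := by
  rw [mem_compIn] at hv
  ext z
  rw [mem_compIn, mem_compIn]
  exact ⟨fun hz => ⟨hz.1, relIn_trans hv.2 hz.2⟩,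
    fun hz => ⟨hz.1, relIn_trans (relIn_symm hv.2) hz.2⟩⟩

private lemma compIn_closed {A : Finset V} {u v x : V} (hv : v ∈ compIn G A u)
    (hx : x ∈ A) (hadj : G.Adj v x) : x ∈ compIn G A u := by
  rw [mem_compIn] at hv ⊢
  exact ⟨hx, relIn_trans hv.2 (relIn_adj (compIn_subset (mem_compIn.2 hv)) hx hadj)⟩

/-- Lift a walk whose support lies in a set to reachability in the induced graph. -/
private lemma reach_of_walk_in {A : Set V} :
    ∀ {x y : V} (p : G.Walk x y) (hp : ∀ z ∈ p.support, z ∈ A),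
      (G.induce A).Reachable ⟨x, hp _ p.start_mem_support⟩ ⟨y, hp _ p.end_mem_support⟩ := by
  intro x y p
  induction p with
  | nil => intro hp; exact Reachable.refl _
  | @cons a b y h p ih =>
    intro hp
    have hb : b ∈ A := hp b (by simp)
    have hadj : (G.induce A).Adj ⟨a, hp _ (by simp)⟩ ⟨b, hb⟩ := h
    have := ih (fun z hz => hp z (by rw [Walk.support_cons]; exact List.mem_cons_of_mem _ hz))
    exact hadj.reachable.trans this

private lemma compIn_connected {A : Finset V} {u : V} (hu : u ∈ A) :
    (G.induce (compIn G A u : Set V)).Connected := by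
  haveI : Nonempty (compIn G A u : Set V) := ⟨⟨u, self_mem_compIn hu⟩⟩
  refine Connected.mk ?_
  rintro ⟨a, ha⟩ ⟨b, hb⟩
  have key : ∀ (z : V) (hz : z ∈ compIn G A u),
      (G.induce (compIn G A u : Set V)).Reachable ⟨u, self_mem_compIn hu⟩ ⟨z, hz⟩ := by
    intro z hz
    obtain ⟨p, hp⟩ := (mem_compIn.1 hz).2
    have hsup : ∀ y ∈ p.support, y ∈ (compIn G A u : Set V) := by
      intro y hy
      have := relIn_of_support p hp y hy
      exact mem_compIn.2 ⟨hp y hy, this⟩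
    exact reach_of_walk_in p hsup
  exact (key a (by exact_mod_cast ha)).symm.trans (key b (by exact_mod_cast hb))

/-- Attaching vertices each adjacent to a connected set keeps it connected. -/
private lemma attach_connected {B E : Finset V}
    (hB : (G.induce (B : Set V)).Connected)
    (hE : ∀ x ∈ E, ∃ y ∈ B, G.Adj x y) :
    (G.induce ((B ∪ E : Finset V) : Set V)).Connected := by
  induction E using Finset.induction_on with
  | empty => rw [Finset.union_empty]; exact hB
  | @insert a E' ha ih =>
    obtain ⟨y, hy, hadj⟩ := hE a (Finset.mem_insert_self a E')
    have ih' := ih (fun x hx => hE x (Finset.mem_insert_of_mem hx))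
    have hset : ((B ∪ insert a E' : Finset V) : Set V)
        = ((B ∪ E' : Finset V) : Set V) ∪ {a, y} := by
      ext z
      simp only [Finset.coe_union, Set.mem_union, Finset.coe_insert, Set.mem_insert_iff,
        Finset.mem_coe, Finset.mem_insert, Set.mem_singleton_iff]
      constructor
      · rintro (hz | hz | hz)
        · exact Or.inl (Or.inl hz)
        · exact Or.inr (Or.inl hz)
        · exact Or.inl (Or.inr hz)
      · rintro ((hz | hz) | hz | hz)
        · exact Or.inl hz
        · exact Or.inr (Or.inr hz)
        · exact Or.inr (Or.inl hz)
        · exact Or.inl (hz ▸ hy)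
    rw [hset]
    refine induce_union_connected ih'.preconnected (induce_pair_connected_of_adj hadj).preconnected ?_
    exact ⟨y, by simp [hy]⟩

/-- Splitting an independence bound over a union. -/
private lemma indep_card_union {A B : Finset V} {a b : ℝ}
    (hA : ∀ S : Finset V, S ⊆ A → IndepF G S → (S.card : ℝ) ≤ a)
    (hB : ∀ S : Finset V, S ⊆ B → IndepF G S → (S.card : ℝ) ≤ b) :
    ∀ S : Finset V, S ⊆ A ∪ B → IndepF G S → (S.card : ℝ) ≤ a + b := by
  intro S hS hSind
  have hsplit := Finset.card_filter_add_card_filter_not (s := S) (p := (· ∈ A))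
  have h1 : ((S.filter (· ∈ A)).card : ℝ) ≤ a :=
    hA _ (fun x hx => (Finset.mem_filter.1 hx).2)
      (indepF_mono (Finset.filter_subset _ _) hSind)
  have h2 : ((S.filter (fun x => ¬ x ∈ A)).card : ℝ) ≤ b := by
    refine hB _ (fun x hx => ?_) (indepF_mono (Finset.filter_subset _ _) hSind)
    obtain ⟨hx1, hx2⟩ := Finset.mem_filter.1 hx
    rcases Finset.mem_union.1 (hS hx1) with h | h
    · exact absurd h hx2
    · exact h
  have : (S.card : ℝ) = ((S.filter (· ∈ A)).card : ℝ)
      + ((S.filter (fun x => ¬ x ∈ A)).card : ℝ) := by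
    rw [← hsplit]; push_cast; ring
  rw [this]
  exact add_le_add h1 h2

end Infra


variable {ι : Type}

private def parGraph (r : ι) (par : ι → ι) : SimpleGraph ι :=
  SimpleGraph.fromRel (fun a b => a ≠ r ∧ par a = b)

private lemma parGraph_adj_par {r : ι} {par : ι → ι} {rk : ι → ℕ}
    (hrk : ∀ t, t ≠ r → rk (par t) < rk t) {t : ι} (ht : t ≠ r) :
    (parGraph r par).Adj t (par t) := by
  rw [parGraph, fromRel_adj]
  refine ⟨fun h => ?_, Or.inl ⟨ht, rfl⟩⟩
  have := hrk t ht
  rw [← h] at this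
  omega

private lemma parGraph_adj_cases {r : ι} {par : ι → ι} {a b : ι}
    (h : (parGraph r par).Adj a b) :
    (a ≠ r ∧ par a = b) ∨ (b ≠ r ∧ par b = a) := by
  rw [parGraph, fromRel_adj] at h
  exact h.2

private lemma parGraph_reach_root {r : ι} {par : ι → ι} {rk : ι → ℕ}
    (hrk : ∀ t, t ≠ r → rk (par t) < rk t) (t : ι) :
    (parGraph r par).Reachable t r := by
  have key : ∀ n t, rk t ≤ n → (parGraph r par).Reachable t r := by
    intro n
    induction n with
    | zero =>
      intro t ht
      by_cases h : t = r
      · exact h ▸ Reachable.refl _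
      · exact absurd (hrk t h) (by omega)
    | succ n ih =>
      intro t ht
      by_cases h : t = r
      · exact h ▸ Reachable.refl _
      · exact (parGraph_adj_par hrk h).reachable.trans (ih _ (by have := hrk t h; omega))
  exact key (rk t) t le_rfl

private lemma parGraph_isTree {r : ι} {par : ι → ι} {rk : ι → ℕ}
    (hrk : ∀ t, t ≠ r → rk (par t) < rk t) :
    (parGraph r par).IsTree := by
  constructor
  · haveI : Nonempty ι := ⟨r⟩
    exact Connected.mk fun a b =>
      (parGraph_reach_root hrk a).trans (parGraph_reach_root hrk b).symm
  · intro v c hc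
    classical
    have hsupne : c.support.toFinset.Nonempty :=
      ⟨v, List.mem_toFinset.2 (Walk.start_mem_support c)⟩
    obtain ⟨m, hmmem, hmax⟩ := c.support.toFinset.exists_max_image rk hsupne
    rw [List.mem_toFinset] at hmmem
    have hmax' : ∀ z ∈ c.support, rk z ≤ rk m := fun z hz => hmax z (List.mem_toFinset.2 hz)
    set c' := c.rotate m hmmem with hc'def
    have hc' : c'.IsCycle := hc.rotate hmmem
    have hmemc' : ∀ z, z ∈ c'.support → z ∈ c.support := by
      intro z hz
      rcases (Walk.mem_support_iff c').1 hz with h | h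
      · exact h ▸ hmmem
      · exact List.mem_of_mem_tail ((Walk.support_rotate c m hmmem).mem_iff.1 h)
    -- decompose c'
    have hnotnil : ¬ c'.Nil := hc'.not_nil
    obtain ⟨x, hadj, q, hq⟩ := Walk.not_nil_iff.1 hnotnil
    -- first neighbor is par m
    have neighbor_eq : ∀ z, (parGraph r par).Adj m z → z ∈ c'.support → z = par m := by
      intro z hz hzs
      rcases parGraph_adj_cases hz with ⟨_, h⟩ | ⟨hz2, h⟩
      · exact h.symm
      · have h1 : rk m < rk z := h ▸ hrk z hz2
        have h2 : rk z ≤ rk m := hmax' z (hmemc' z hzs)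
        omega
    have hx : x = par m := by
      refine neighbor_eq x hadj ?_
      rw [hq, Walk.support_cons]
      exact List.mem_cons_of_mem _ q.start_mem_support
    -- q is not nil
    have hqlen : q.length + 1 = c'.length := by rw [hq]; simp
    have h3 : 3 ≤ c'.length := hc'.three_le_length
    have hqnotnil : ¬ q.Nil := by
      rw [Walk.nil_iff_length_eq]; omega
    have hqrevnotnil : ¬ q.reverse.Nil := by
      rw [Walk.nil_iff_length_eq]; rw [Walk.length_reverse]; omega
    obtain ⟨y, hadjy, q2, hq2⟩ := Walk.not_nil_iff.1 hqrevnotnil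
    have hy : y = par m := by
      refine neighbor_eq y hadjy ?_
      have h5 : y ∈ q.reverse.support := by
        rw [hq2, Walk.support_cons]
        exact List.mem_cons_of_mem _ q2.start_mem_support
      rw [Walk.support_reverse, List.mem_reverse] at h5
      rw [hq, Walk.support_cons]
      exact List.mem_cons_of_mem _ h5
    -- the edge s(m,y) is in q.edges
    have hedge : s(m, y) ∈ q.edges := by
      have : s(m, y) ∈ q.reverse.edges := by
        rw [hq2]; simp [Walk.edges_cons]
      rwa [Walk.edges_reverse, List.mem_reverse] at this
    -- trail property
    have htrail : c'.IsTrail := hc'.isTrail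
    rw [hq, Walk.isTrail_cons] at htrail
    subst hx
    rw [hy] at hedge
    exact htrail.2 hedge

private lemma parGraph_induce_connected {r : ι} {par : ι → ι} {rk : ι → ℕ}
    (hrk : ∀ t, t ≠ r → rk (par t) < rk t) {S : Set ι} {m : ι} (hm : m ∈ S)
    (hS : ∀ t ∈ S, t ≠ m → t ≠ r ∧ par t ∈ S) :
    ((parGraph r par).induce S).Connected := by
  have key : ∀ n t (ht : t ∈ S), rk t ≤ n →
      ((parGraph r par).induce S).Reachable ⟨t, ht⟩ ⟨m, hm⟩ := by
    intro n
    induction n with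
    | zero =>
      intro t ht hle
      by_cases h : t = m
      · subst h; exact Reachable.refl _
      · obtain ⟨hr', _⟩ := hS t ht h
        exact absurd (hrk t hr') (by omega)
    | succ n ih =>
      intro t ht hle
      by_cases h : t = m
      · subst h; exact Reachable.refl _
      · obtain ⟨hr', hp⟩ := hS t ht h
        have hadj : ((parGraph r par).induce S).Adj ⟨t, ht⟩ ⟨par t, hp⟩ :=
          parGraph_adj_par hrk hr'
        exact hadj.reachable.trans (ih _ hp (by have := hrk t hr'; omega))
  haveI : Nonempty S := ⟨⟨m, hm⟩⟩
  refine Connected.mk ?_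
  rintro ⟨a, ha⟩ ⟨b, hb⟩
  exact (key (rk a) a ha le_rfl).trans (key (rk b) b hb le_rfl).symm

section MainRec
variable {V : Type} [Fintype V] [DecidableEq V]

private lemma main_rec (G : SimpleGraph V) (c : ℝ)
    (hc1 : 1 / 2 ≤ c) (hc2 : c < 1) (d : ℕ) (hd : 0 < d)
    (hsep : ∀ w : V → ℝ, (∀ v, 0 ≤ w v) → (∀ v, w v ≤ 1) → (∑ v, w v) = 1 →
      ∃ X : Set V,
        (∀ S : Finset V, (S : Set V) ⊆ X →
          (∀ u ∈ S, ∀ v ∈ S, u ≠ v → ¬ G.Adj u v) → S.card ≤ d) ∧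
        ∀ D : Finset V, (D : Set V) ⊆ Xᶜ → (G.induce (D : Set V)).Connected →
          (∑ v ∈ D, w v) ≤ c) :
    ∀ (n : ℕ) (U W : Finset V), W ⊆ U →
      U.card * (Fintype.card V + 1) + (U \ W).card ≤ n →
      (∀ S : Finset V, S ⊆ W → IndepF G S → (S.card : ℝ) ≤ 2 * d / (1 - c)) →
      ∃ (ι : Type) (r : ι) (par : ι → ι) (rk : ι → ℕ) (χ : ι → Set V),
        (∀ t, t ≠ r → rk (par t) < rk t) ∧
        (∀ t, χ t ⊆ (U : Set V)) ∧
        ((W : Set V) ⊆ χ r) ∧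
        (∀ u v : V, u ∈ U → v ∈ U → G.Adj u v → ∃ t, u ∈ χ t ∧ v ∈ χ t) ∧
        (∀ v ∈ U, ∃ m, v ∈ χ m ∧ ∀ t, v ∈ χ t → t ≠ m → t ≠ r ∧ v ∈ χ (par t)) ∧
        (∀ t, ∀ S : Finset V, ↑S ⊆ χ t → IndepF G S →
          (S.card : ℝ) ≤ 2 * d / (1 - c) + d) := by
  have hc0 : (0:ℝ) < 1 - c := by linarith
  have hdR : (0:ℝ) < d := by exact_mod_cast hd
  intro n
  induction n using Nat.strong_induction_on with
  | _ n ih =>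
  intro U W hWU hmeas hWind
  classical
  by_cases hUW : U ⊆ W
  · -- base case: single bag W
    refine ⟨Unit, (), id, fun _ => 0, fun _ => (W : Set V), ?_, ?_, ?_, ?_, ?_, ?_⟩
    · exact fun t ht => absurd (Subsingleton.elim t ()) ht
    · exact fun _ => Finset.coe_subset.2 hWU
    · exact subset_rfl
    · exact fun u v hu hv _ => ⟨(), hUW hu, hUW hv⟩
    · intro v hv
      exact ⟨(), hUW hv, fun t _ ht => absurd (Subsingleton.elim t ()) ht⟩
    · intro t S hS hSind
      have := hWind S (by exact_mod_cast hS) hSind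
      linarith
  · obtain ⟨u₀, hu₀U, hu₀W⟩ := Finset.not_subset.1 hUW
    by_cases hsmall : ∀ J ⊆ W, IndepF G J → (J.card : ℝ) ≤ d / (1 - c)
    · -- enlarge W by one vertex
      have hsub : insert u₀ W ⊆ U := Finset.insert_subset hu₀U hWU
      have hmeas' : U.card * (Fintype.card V + 1) + (U \ insert u₀ W).card < n := by
        have h1 : U \ insert u₀ W = (U \ W).erase u₀ := by
          ext z; simp [Finset.mem_sdiff, Finset.mem_erase, Finset.mem_insert]; tauto
        have h2 : (U \ insert u₀ W).card < (U \ W).card := by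
          rw [h1]
          exact Finset.card_erase_lt_of_mem (Finset.mem_sdiff.2 ⟨hu₀U, hu₀W⟩)
        omega
      have hind' : ∀ S : Finset V, S ⊆ insert u₀ W → IndepF G S →
          (S.card : ℝ) ≤ 2 * d / (1 - c) := by
        intro S hS hSind
        have h1 : S.erase u₀ ⊆ W := by
          intro x hx
          obtain ⟨hx1, hx2⟩ := Finset.mem_erase.1 hx
          rcases Finset.mem_insert.1 (hS hx2) with h | h
          · exact absurd h hx1
          · exact h
        have h2 := hsmall _ h1 (indepF_mono (Finset.erase_subset _ _) hSind)
        have h3 : S.card ≤ (S.erase u₀).card + 1 := by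
          by_cases hu : u₀ ∈ S
          · rw [Finset.card_erase_of_mem hu]; omega
          · rw [Finset.erase_eq_of_notMem hu]; omega
        have h4 : (S.card : ℝ) ≤ ((S.erase u₀).card : ℝ) + 1 := by exact_mod_cast h3
        have hd1 : (1:ℝ) ≤ (d:ℝ) := by exact_mod_cast hd
        have h5 : (1:ℝ) ≤ (d:ℝ) / (1 - c) := by
          rw [le_div_iff₀ hc0]; linarith
        have : (d:ℝ)/(1-c) + (d:ℝ)/(1-c) = 2*d/(1-c) := by ring
        linarith
      obtain ⟨ι, r, par, rk, χ, p1, p2, p3, p4, p5, p6⟩ :=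
        ih _ hmeas' U (insert u₀ W) hsub le_rfl hind'
      exact ⟨ι, r, par, rk, χ, p1, p2,
        (Finset.coe_subset.2 (Finset.subset_insert u₀ W)).trans p3, p4, p5, p6⟩
    · -- separator step
      push_neg at hsmall
      obtain ⟨J₀, hJ₀W, hJ₀ind, hJ₀big⟩ := hsmall
      obtain ⟨I, hIW, hIind, hImax⟩ := exists_max_indep G W
      have hIbig : (d:ℝ)/(1-c) < I.card :=
        lt_of_lt_of_le hJ₀big (by exact_mod_cast hImax J₀ hJ₀W hJ₀ind)
      have hIpos : 0 < I.card := by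
        rcases Nat.eq_zero_or_pos I.card with h | h
        · rw [h] at hIbig
          have h2 : (0:ℝ) ≤ (d:ℝ)/(1-c) := by positivity
          norm_num at hIbig
          linarith
        · exact h
      have hIcard0 : ((I.card : ℝ)) ≠ 0 := by positivity
      have hIcardpos : (0:ℝ) < I.card := by positivity
      set w : V → ℝ := fun v => if v ∈ I then ((I.card : ℝ))⁻¹ else 0 with hw
      have hwsum : ∀ D : Finset V, ∑ v ∈ D, w v = ((D ∩ I).card : ℝ) * (I.card:ℝ)⁻¹ := by
        intro D
        simp only [hw]
        rw [Finset.sum_ite_mem, Finset.sum_const, nsmul_eq_mul]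
      have hwpos : ∀ v, 0 ≤ w v := by
        intro v
        simp only [hw]
        split
        · positivity
        · exact le_rfl
      have hwle1 : ∀ v, w v ≤ 1 := by
        intro v
        simp only [hw]
        split
        · rw [inv_le_one₀ hIcardpos]
          exact_mod_cast hIpos
        · exact zero_le_one
      have hwtot : ∑ v, w v = 1 := by
        have := hwsum Finset.univ
        rw [Finset.univ_inter] at this
        rw [this, mul_inv_cancel₀ hIcard0]
      obtain ⟨X, hX1, hX2⟩ := hsep w hwpos hwle1 hwtot
      have hX1R : ∀ S : Finset V, ↑S ⊆ X → IndepF G S → (S.card:ℝ) ≤ d :=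
        fun S h hi => by exact_mod_cast hX1 S h hi
      have hbal : ∀ D : Finset V, ((D:Set V) ⊆ Xᶜ) → (G.induce (D:Set V)).Connected →
          ((D ∩ I).card : ℝ) ≤ c * I.card := by
        intro D h1 h2
        have h3 := hX2 D h1 h2
        rw [hwsum] at h3
        have h4 : ((D ∩ I).card:ℝ) = ((D∩I).card * (I.card:ℝ)⁻¹) * I.card := by
          field_simp
        rw [h4]
        nlinarith [hIcardpos]
      set X' : Finset V := U.filter (· ∈ X) with hX'
      set Wh : Finset V := W ∪ X' with hWh
      set A : Finset V := U \ Wh with hA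
      set comps : Finset (Finset V) := A.image (compIn G A) with hcomps
      set WC : Finset V → Finset V := fun C => Wh.filter (fun x => ∃ y ∈ C, G.Adj x y) with hWC
      set UC : Finset V → Finset V := fun C => C ∪ WC C with hUC
      have hWhU : Wh ⊆ U := Finset.union_subset hWU (Finset.filter_subset _ _)
      have hIU : I ⊆ U := hIW.trans hWU
      have hIWh : I ⊆ Wh := hIW.trans Finset.subset_union_left
      have hAX : ∀ z ∈ A, z ∉ X := by
        intro z hz hzX
        have hzU : z ∈ U := (Finset.mem_sdiff.1 hz).1
        exact (Finset.mem_sdiff.1 hz).2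
          (Finset.mem_union_right _ (Finset.mem_filter.2 ⟨hzU, hzX⟩))
      have hAWh : ∀ z ∈ A, z ∉ Wh := fun z hz => (Finset.mem_sdiff.1 hz).2
      have hAU : A ⊆ U := Finset.sdiff_subset
      have hCfacts : ∀ C ∈ comps, ∃ u, u ∈ A ∧ compIn G A u = C := by
        intro C hC
        obtain ⟨u, hu, huC⟩ := Finset.mem_image.1 hC
        exact ⟨u, hu, huC⟩
      have hCsubA : ∀ C ∈ comps, C ⊆ A := by
        intro C hC
        obtain ⟨u, _, rfl⟩ := hCfacts C hC
        exact compIn_subset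
      have hCconn : ∀ C ∈ comps, (G.induce (C : Set V)).Connected := by
        intro C hC
        obtain ⟨u, hu, rfl⟩ := hCfacts C hC
        exact compIn_connected hu
      have hCX : ∀ C ∈ comps, (C : Set V) ⊆ Xᶜ := by
        intro C hC z hz
        exact hAX z (hCsubA C hC hz)
      have hβI : (I.card:ℝ) ≤ 2 * d / (1 - c) := hWind I hIW hIind
      -- any independent subset of W adjacent-attached dominating bound, and strictness:
      have hstrict : ∀ C ∈ comps, UC C ⊂ U := by
        intro C hC
        have hsub : UC C ⊆ U :=
          Finset.union_subset ((hCsubA C hC).trans hAU)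
            ((Finset.filter_subset _ _).trans hWhU)
        rw [Finset.ssubset_iff_of_subset hsub]
        by_contra h
        push_neg at h
        have hIWC : ∀ i ∈ I, i ∉ X → ∃ y ∈ C, G.Adj i y := by
          intro i hi _
          have h2 := h i (hIU hi)
          rw [hUC, Finset.mem_union] at h2
          rcases h2 with h' | h'
          · exact absurd (hIWh hi) (hAWh i (hCsubA C hC h'))
          · exact (Finset.mem_filter.1 h').2
        have hDX : (((C ∪ I.filter (fun i => i ∉ X)) : Finset V) : Set V) ⊆ Xᶜ := by
          intro z hz
          rcases Finset.mem_union.1 (by exact_mod_cast hz) with h' | h'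
          · exact hCX C hC (by exact_mod_cast h')
          · exact (Finset.mem_filter.1 h').2
        have hDconn := attach_connected (G := G) (hCconn C hC)
          (fun x hx => hIWC x (Finset.mem_filter.1 hx).1 (Finset.mem_filter.1 hx).2)
        have hDbal := hbal _ hDX hDconn
        have h7 : I.filter (fun i => i ∉ X) ⊆ (C ∪ I.filter (fun i => i ∉ X)) ∩ I :=
          fun z hz => Finset.mem_inter.2
            ⟨Finset.mem_union_right _ hz, (Finset.mem_filter.1 hz).1⟩
        have h8 : ((I.filter (fun i => i ∉ X)).card : ℝ) ≤ c * I.card :=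
          le_trans (by exact_mod_cast Finset.card_le_card h7) hDbal
        have h9 : ((I.filter (fun i => i ∈ X)).card : ℝ) ≤ d := by
          refine hX1R _ (fun z hz => ?_) (indepF_mono (Finset.filter_subset _ _) hIind)
          exact (Finset.mem_filter.1 (by exact_mod_cast hz)).2
        have h10 := Finset.card_filter_add_card_filter_not
          (s := I) (p := (fun i => i ∈ X))
        have h11 : (I.card : ℝ) = ((I.filter (fun i => i ∈ X)).card : ℝ)
            + ((I.filter (fun i => ¬ i ∈ X)).card : ℝ) := by
          rw [← h10]; push_cast; ring
        rw [div_lt_iff₀ hc0] at hIbig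
        nlinarith
      -- the exchange argument: independence bound for child boundaries
      have hWCbound : ∀ C ∈ comps, ∀ S : Finset V, S ⊆ WC C → IndepF G S →
          (S.card : ℝ) ≤ 2 * d / (1 - c) := by
        intro C hC S hSWC hSind
        have hSWh : S ⊆ Wh := hSWC.trans (Finset.filter_subset _ _)
        have hSXd : ((S.filter (fun x => x ∈ X)).card : ℝ) ≤ d := by
          refine hX1R _ (fun z hz => ?_) (indepF_mono (Finset.filter_subset _ _) hSind)
          exact (Finset.mem_filter.1 (by exact_mod_cast hz)).2
        set J := S.filter (fun x => ¬ x ∈ X) with hJdef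
        have hJS : J ⊆ S := Finset.filter_subset _ _
        have hJW : J ⊆ W := by
          intro x hx
          obtain ⟨hx1, hx2⟩ := Finset.mem_filter.1 hx
          rcases Finset.mem_union.1 (hSWh hx1) with h | h
          · exact h
          · exact absurd (Finset.mem_filter.1 h).2 hx2
        have hJind : IndepF G J := indepF_mono hJS hSind
        have hJadj : ∀ j ∈ J, ∃ y ∈ C, G.Adj j y := fun j hj =>
          (Finset.mem_filter.1 (hSWC (hJS hj))).2
        set K := I.filter (fun i => i ∉ X ∧ i ∉ J ∧ ∃ j ∈ J, G.Adj i j) with hKdef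
        set I'' := I.filter (fun i => i ∉ X ∧ i ∉ J ∧ ¬ ∃ j ∈ J, G.Adj i j) with hI''def
        -- the connected set D
        set D := (C ∪ J) ∪ K with hDdef
        have hDX : ((D : Finset V) : Set V) ⊆ Xᶜ := by
          intro z hz
          rcases Finset.mem_union.1 (by exact_mod_cast hz) with h' | h'
          · rcases Finset.mem_union.1 h' with h'' | h''
            · exact hCX C hC (by exact_mod_cast h'')
            · exact (Finset.mem_filter.1 h'').2
          · exact (Finset.mem_filter.1 h').2.1
        have hCJconn : (G.induce ((C ∪ J : Finset V) : Set V)).Connected :=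
          attach_connected (hCconn C hC) hJadj
        have hDconn : (G.induce ((D : Finset V) : Set V)).Connected := by
          refine attach_connected hCJconn ?_
          intro k hk
          obtain ⟨j, hj, hadj⟩ := (Finset.mem_filter.1 hk).2.2.2
          exact ⟨j, Finset.mem_union_right _ hj, hadj⟩
        have hDbal := hbal D hDX hDconn
        -- K ∪ (I ∩ J) sits inside D ∩ I
        have hsub1 : K ∪ I.filter (fun i => i ∈ J) ⊆ D ∩ I := by
          intro z hz
          rcases Finset.mem_union.1 hz with h' | h'
          · exact Finset.mem_inter.2 ⟨Finset.mem_union_right _ h', (Finset.mem_filter.1 h').1⟩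
          · exact Finset.mem_inter.2
              ⟨Finset.mem_union_left _ (Finset.mem_union_right _ (Finset.mem_filter.1 h').2),
               (Finset.mem_filter.1 h').1⟩
        have hdisj1 : Disjoint K (I.filter (fun i => i ∈ J)) := by
          rw [Finset.disjoint_left]
          intro z hz hz2
          exact (Finset.mem_filter.1 hz).2.2.1 (Finset.mem_filter.1 hz2).2
        have hcard1 : (K.card : ℝ) + ((I.filter (fun i => i ∈ J)).card : ℝ) ≤ c * I.card := by
          have := Finset.card_union_of_disjoint hdisj1
          have h2 := Finset.card_le_card hsub1
          have h3 : ((D ∩ I).card : ℝ) ≤ c * I.card := hDbal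
          have h4 : (K ∪ I.filter (fun i => i ∈ J)).card ≤ (D ∩ I).card := h2
          rw [this] at h4
          have h5 : ((K.card + (I.filter (fun i => i ∈ J)).card : ℕ) : ℝ) ≤ ((D ∩ I).card : ℝ) :=
            by exact_mod_cast h4
          push_cast at h5
          linarith
        -- the exchange set L
        have hJI''disj : Disjoint J I'' := by
          rw [Finset.disjoint_right]
          intro z hz hz2
          exact (Finset.mem_filter.1 hz).2.2.1 hz2
        have hLind : IndepF G (J ∪ I'') := by
          intro u hu v hv huv
          rcases Finset.mem_union.1 hu with h1 | h1 <;> rcases Finset.mem_union.1 hv with h2 | h2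
          · exact hJind u h1 v h2 huv
          · intro hadj
            exact (Finset.mem_filter.1 h2).2.2.2 ⟨u, h1, hadj.symm⟩
          · intro hadj
            exact (Finset.mem_filter.1 h1).2.2.2 ⟨v, h2, hadj⟩
          · exact indepF_mono (Finset.filter_subset _ _) hIind u h1 v h2 huv
        have hLW : J ∪ I'' ⊆ W := Finset.union_subset hJW ((Finset.filter_subset _ _).trans hIW)
        have hLcard : J.card + I''.card ≤ I.card := by
          have := hImax (J ∪ I'') hLW hLind
          rwa [Finset.card_union_of_disjoint hJI''disj] at this
        -- covering of I
        have hcover : I ⊆ ((I.filter (fun i => i ∈ X) ∪ I.filter (fun i => i ∈ J)) ∪ K) ∪ I'' := by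
          intro i hi
          by_cases h1 : i ∈ X
          · exact Finset.mem_union_left _ (Finset.mem_union_left _ (Finset.mem_union_left _
              (Finset.mem_filter.2 ⟨hi, h1⟩)))
          by_cases h2 : i ∈ J
          · exact Finset.mem_union_left _ (Finset.mem_union_left _ (Finset.mem_union_right _
              (Finset.mem_filter.2 ⟨hi, h2⟩)))
          by_cases h3 : ∃ j ∈ J, G.Adj i j
          · exact Finset.mem_union_left _ (Finset.mem_union_right _
              (Finset.mem_filter.2 ⟨hi, h1, h2, h3⟩))
          · exact Finset.mem_union_right _ (Finset.mem_filter.2 ⟨hi, h1, h2, h3⟩)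
        have hIXd : ((I.filter (fun i => i ∈ X)).card : ℝ) ≤ d := by
          refine hX1R _ (fun z hz => ?_) (indepF_mono (Finset.filter_subset _ _) hIind)
          exact (Finset.mem_filter.1 (by exact_mod_cast hz)).2
        have hcovercard : (I.card : ℝ) ≤ ((I.filter (fun i => i ∈ X)).card : ℝ)
            + ((I.filter (fun i => i ∈ J)).card : ℝ) + (K.card : ℝ) + (I''.card : ℝ) := by
          have h1 := Finset.card_le_card hcover
          have h2 := (Finset.card_union_le ((I.filter (fun i => i ∈ X)
            ∪ I.filter (fun i => i ∈ J)) ∪ K) I'')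
          have h3 := (Finset.card_union_le (I.filter (fun i => i ∈ X)
            ∪ I.filter (fun i => i ∈ J)) K)
          have h4 := (Finset.card_union_le (I.filter (fun i => i ∈ X))
            (I.filter (fun i => i ∈ J)))
          have : I.card ≤ (I.filter (fun i => i ∈ X)).card
              + (I.filter (fun i => i ∈ J)).card + K.card + I''.card := by omega
          exact_mod_cast this
        -- combine: |J| ≤ d + c |I|
        have hJbound : (J.card : ℝ) ≤ d + c * I.card := by
          have h1 : (J.card : ℝ) + (I''.card : ℝ) ≤ I.card := by exact_mod_cast hLcard
          linarith
        -- final count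
        have hsplitS : (S.card : ℝ) = ((S.filter (fun x => x ∈ X)).card : ℝ) + (J.card : ℝ) := by
          have := Finset.card_filter_add_card_filter_not (s := S) (p := (fun x => x ∈ X))
          rw [← this]; push_cast; ring
        have hb : (2 * (d:ℝ) / (1 - c)) * (1 - c) = 2 * d := by
          field_simp
        nlinarith [hβI]
      -- independence bound for the root bag
      have hWhbound : ∀ S : Finset V, S ⊆ Wh → IndepF G S →
          (S.card : ℝ) ≤ 2 * d / (1 - c) + d := by
        refine indep_card_union hWind ?_
        intro S hS hSind
        refine hX1R S (fun z hz => ?_) hSind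
        exact (Finset.mem_filter.1 (hS (by exact_mod_cast hz))).2
      have hcompeq : ∀ C ∈ comps, ∀ z ∈ C, compIn G A z = C := by
        intro C hC z hz
        obtain ⟨u, hu, rfl⟩ := hCfacts C hC
        exact compIn_eq_of_mem hz
      have hWCsub : ∀ C, WC C ⊆ UC C := fun C => Finset.subset_union_right
      have hUCsub : ∀ C ∈ comps, UC C ⊆ U := fun C hC => (hstrict C hC).subset
      -- children decompositions via induction hypothesis
      have hchild : ∀ C : {C : Finset V // C ∈ comps},
          ∃ (ι : Type) (r : ι) (par : ι → ι) (rk : ι → ℕ) (χ : ι → Set V),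
            (∀ t, t ≠ r → rk (par t) < rk t) ∧
            (∀ t, χ t ⊆ ((UC C.1 : Finset V) : Set V)) ∧
            ((WC C.1 : Set V) ⊆ χ r) ∧
            (∀ u v : V, u ∈ UC C.1 → v ∈ UC C.1 → G.Adj u v → ∃ t, u ∈ χ t ∧ v ∈ χ t) ∧
            (∀ v ∈ UC C.1, ∃ m, v ∈ χ m ∧ ∀ t, v ∈ χ t → t ≠ m → t ≠ r ∧ v ∈ χ (par t)) ∧
            (∀ t, ∀ S : Finset V, ↑S ⊆ χ t → IndepF G S →
              (S.card : ℝ) ≤ 2 * d / (1 - c) + d) := by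
        rintro ⟨C, hC⟩
        have hucard : (UC C).card < U.card := Finset.card_lt_card (hstrict C hC)
        have h2 : (UC C \ WC C).card ≤ Fintype.card V :=
          le_trans (Finset.card_le_card Finset.sdiff_subset) (Finset.card_le_univ _)
        have hm : (UC C).card * (Fintype.card V + 1) + (UC C \ WC C).card < n := by
          have h1 : U.card * (Fintype.card V + 1) ≤ n := le_trans (Nat.le_add_right _ _) hmeas
          calc (UC C).card * (Fintype.card V + 1) + (UC C \ WC C).card
              ≤ (UC C).card * (Fintype.card V + 1) + Fintype.card V := by omega
            _ < ((UC C).card + 1) * (Fintype.card V + 1) := by rw [add_mul, one_mul]; omega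
            _ ≤ U.card * (Fintype.card V + 1) :=
                Nat.mul_le_mul (Nat.succ_le_of_lt hucard) le_rfl
            _ ≤ n := h1
        exact ih _ hm (UC C) (WC C) (hWCsub C) le_rfl (hWCbound C hC)
      choose ιf rf parf rkf χf hp1 hp2 hp3 hp4 hp5 hp6 using hchild
      -- glue everything together
      refine ⟨Option (Σ C : {C : Finset V // C ∈ comps}, ιf C), none,
        (fun t => t.bind (fun p => if p.2 = rf p.1 then none
          else some ⟨p.1, parf p.1 p.2⟩)),
        (fun t => t.elim 0 (fun p => rkf p.1 p.2 + 1)),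
        (fun t => t.elim (Wh : Set V) (fun p => χf p.1 p.2)), ?_, ?_, ?_, ?_, ?_, ?_⟩
      · -- rank decreases towards the root
        rintro (_ | ⟨C, a⟩) ht
        · exact absurd rfl ht
        · by_cases h : a = rf C
          · simp only [Option.bind, h, if_pos]
            exact Nat.succ_pos _
          · simp only [Option.bind, if_neg h, Option.elim]
            exact Nat.succ_lt_succ (hp1 C a h)
      · -- bags inside U
        rintro (_ | ⟨C, a⟩)
        · exact Finset.coe_subset.2 hWhU
        · exact (hp2 C a).trans (Finset.coe_subset.2 (hUCsub C.1 C.2))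
      · -- W inside the root bag
        exact Finset.coe_subset.2 Finset.subset_union_left
      · -- edges are covered
        intro u v hu hv hadj
        by_cases huW : u ∈ Wh <;> by_cases hvW : v ∈ Wh
        · exact ⟨none, by exact_mod_cast huW, by exact_mod_cast hvW⟩
        · have hvA : v ∈ A := Finset.mem_sdiff.2 ⟨hv, hvW⟩
          have hC : compIn G A v ∈ comps := Finset.mem_image_of_mem _ hvA
          have hvC : v ∈ compIn G A v := self_mem_compIn hvA
          have huWC : u ∈ WC (compIn G A v) := Finset.mem_filter.2 ⟨huW, ⟨v, hvC, hadj⟩⟩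
          obtain ⟨t, h1, h2⟩ := hp4 ⟨_, hC⟩ u v (Finset.mem_union_right _ huWC)
            (Finset.mem_union_left _ hvC) hadj
          exact ⟨some ⟨⟨_, hC⟩, t⟩, h1, h2⟩
        · have huA : u ∈ A := Finset.mem_sdiff.2 ⟨hu, huW⟩
          have hC : compIn G A u ∈ comps := Finset.mem_image_of_mem _ huA
          have huC : u ∈ compIn G A u := self_mem_compIn huA
          have hvWC : v ∈ WC (compIn G A u) := Finset.mem_filter.2 ⟨hvW, ⟨u, huC, hadj.symm⟩⟩
          obtain ⟨t, h1, h2⟩ := hp4 ⟨_, hC⟩ u v (Finset.mem_union_left _ huC)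
            (Finset.mem_union_right _ hvWC) hadj
          exact ⟨some ⟨⟨_, hC⟩, t⟩, h1, h2⟩
        · have huA : u ∈ A := Finset.mem_sdiff.2 ⟨hu, huW⟩
          have hvA : v ∈ A := Finset.mem_sdiff.2 ⟨hv, hvW⟩
          have hC : compIn G A u ∈ comps := Finset.mem_image_of_mem _ huA
          have huC : u ∈ compIn G A u := self_mem_compIn huA
          have hvC : v ∈ compIn G A u := compIn_closed huC hvA hadj
          obtain ⟨t, h1, h2⟩ := hp4 ⟨_, hC⟩ u v (Finset.mem_union_left _ huC)
            (Finset.mem_union_left _ hvC) hadj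
          exact ⟨some ⟨⟨_, hC⟩, t⟩, h1, h2⟩
      · -- connected traces
        intro v hv
        by_cases hvW : v ∈ Wh
        · refine ⟨none, by exact_mod_cast hvW, ?_⟩
          rintro (_ | ⟨C, a⟩) hvt ht
          · exact absurd rfl ht
          · refine ⟨by simp, ?_⟩
            have hvUC : v ∈ UC C.1 := by exact_mod_cast hp2 C a hvt
            have hvWC : v ∈ WC C.1 := by
              rcases Finset.mem_union.1 hvUC with h | h
              · exact absurd hvW (hAWh v (hCsubA C.1 C.2 h))
              · exact h
            have hvroot : v ∈ χf C (rf C) := hp3 C (by exact_mod_cast hvWC)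
            obtain ⟨mC, hmC1, hmC2⟩ := hp5 C v hvUC
            have hmCr : mC = rf C := by
              by_contra hne
              exact (hmC2 (rf C) hvroot (fun h => hne h.symm)).1 rfl
            by_cases ha : a = rf C
            · simp only [Option.bind, ha, if_pos]
              exact_mod_cast hvW
            · simp only [Option.bind, if_neg ha, Option.elim]
              have ham : a ≠ mC := fun h => ha (h.trans hmCr)
              exact (hmC2 a hvt ham).2
        · have hvA : v ∈ A := Finset.mem_sdiff.2 ⟨hv, hvW⟩
          have hC0 : compIn G A v ∈ comps := Finset.mem_image_of_mem _ hvA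
          have hvC0 : v ∈ compIn G A v := self_mem_compIn hvA
          obtain ⟨mC, hmC1, hmC2⟩ := hp5 ⟨_, hC0⟩ v (Finset.mem_union_left _ hvC0)
          refine ⟨some ⟨⟨_, hC0⟩, mC⟩, hmC1, ?_⟩
          rintro (_ | ⟨C, a⟩) hvt ht
          · exact absurd (by exact_mod_cast hvt : v ∈ Wh) hvW
          · have hvUC : v ∈ UC C.1 := by exact_mod_cast hp2 C a hvt
            have hvC : v ∈ C.1 := by
              rcases Finset.mem_union.1 hvUC with h | h
              · exact h
              · exact absurd (Finset.mem_filter.1 h).1 hvW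
            have hCeq : C = ⟨compIn G A v, hC0⟩ := by
              apply Subtype.ext
              exact (hcompeq C.1 C.2 v hvC).symm
            subst hCeq
            have ham : a ≠ mC := by
              intro h
              exact ht (by rw [h])
            obtain ⟨h1, h2⟩ := hmC2 a hvt ham
            refine ⟨by simp, ?_⟩
            simp only [Option.bind, if_neg h1, Option.elim]
            exact h2
      · -- independence bound on the bags
        rintro (_ | ⟨C, a⟩) S hS hSind
        · exact hWhbound S (by exact_mod_cast hS) hSind
        · exact hp6 C a S hS hSind

end MainRec

/-- If for every normal weight function `w` on `G` there is a set `X_w` of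
independence number at most `d` whose removal leaves all components of `w`-weight at most
`c` (with `1/2 ≤ c < 1`), then `G` has a tree decomposition all of whose bags have
independence number at most `((3-c)/(1-c))·d`. -/
theorem stmt_19 {V : Type} [Fintype V] (G : SimpleGraph V) (c : ℝ)
    (hc1 : 1 / 2 ≤ c) (hc2 : c < 1) (d : ℕ) (hd : 0 < d)
    (hsep : ∀ w : V → ℝ, (∀ v, 0 ≤ w v) → (∀ v, w v ≤ 1) → (∑ v, w v) = 1 →
      ∃ X : Set V,
        (∀ S : Finset V, (S : Set V) ⊆ X →
          (∀ u ∈ S, ∀ v ∈ S, u ≠ v → ¬ G.Adj u v) → S.card ≤ d) ∧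
        ∀ D : Finset V, (D : Set V) ⊆ Xᶜ → (G.induce (D : Set V)).Connected →
          (∑ v ∈ D, w v) ≤ c) :
    ∃ (ι : Type) (T : SimpleGraph ι) (χ : ι → Set V),
      T.IsTree ∧
      (∀ u v : V, G.Adj u v → ∃ t, u ∈ χ t ∧ v ∈ χ t) ∧
      (∀ v : V, ({t : ι | v ∈ χ t}).Nonempty ∧ (T.induce {t : ι | v ∈ χ t}).Connected) ∧
      (∀ t : ι, ∀ S : Finset V, (S : Set V) ⊆ χ t →
        (∀ u ∈ S, ∀ v ∈ S, u ≠ v → ¬ G.Adj u v) →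
        (S.card : ℝ) ≤ ((3 - c) / (1 - c)) * d) := by
  classical
  have hc0 : (0:ℝ) < 1 - c := by linarith
  have hempty : ∀ S : Finset V, S ⊆ (∅ : Finset V) → IndepF G S →
      (S.card : ℝ) ≤ 2 * d / (1 - c) := by
    intro S hS _
    rw [Finset.subset_empty.1 hS]
    simp
    positivity
  obtain ⟨ι, r, par, rk, χ, p1, p2, p3, p4, p5, p6⟩ :=
    main_rec G c hc1 hc2 d hd hsep
      (Finset.univ.card * (Fintype.card V + 1) + ((Finset.univ : Finset V) \ ∅).card)
      Finset.univ ∅ (Finset.empty_subset _) le_rfl hempty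
  refine ⟨ι, parGraph r par, χ, parGraph_isTree p1, ?_, ?_, ?_⟩
  · exact fun u v h => p4 u v (Finset.mem_univ _) (Finset.mem_univ _) h
  · intro v
    obtain ⟨m, hm1, hm2⟩ := p5 v (Finset.mem_univ v)
    exact ⟨⟨m, hm1⟩, parGraph_induce_connected p1 hm1 (fun t ht htm => hm2 t ht htm)⟩
  · intro t S hS hSind
    have h1 := p6 t S hS hSind
    have h2 : (3 - c)/(1-c) * d = 2*d/(1-c) + d := by
      field_simp
      ring
    linarith
end
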